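/- arXiv:1705.07597 — 2 statements merged into one kernel-verified Lean document; each statement's English description precedes it below -/
import Mathlib

section
/- There exists an absolute constant C > 0 such that for every n ≥ 5 and every translation-invariant nearest-neighbor Hamiltonian H = Σ_{i∈ℤ/nℤ} H_i on n qubits generated by a Hermitian traceless 4×4 matrix h with ‖h‖ ≤ 1 and satisfying tr(H_i H_j) = 0 for all i ≠ j, one has |tr(H H_1 H H_1)/2^n − n ⟨H_1²⟩²| ≤ C, where ⟨X⟩ := tr(X)/2^n. -/
open Matrix Filter Finset
open scoped Classical

/-- computational basis configurations of `n` qubits -/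
abbrev Cfg (n : ℕ) := Fin n → Fin 2

/-- the site following `i` in the cyclic order on `ℤ/nℤ` -/
def nxt {n : ℕ} (i : Fin n) : Fin n :=
  ⟨(i.1 + 1) % n, Nat.mod_lt _ (Nat.lt_of_le_of_lt (Nat.zero_le _) i.2)⟩

/-- the operator acting as the 4×4 matrix `h` on the two neighboring sites `i, i+1`
and as the identity elsewhere -/
noncomputable def twoSite (n : ℕ) (i : Fin n)
    (h : Matrix (Fin 2 × Fin 2) (Fin 2 × Fin 2) ℂ) : Matrix (Cfg n) (Cfg n) ℂ :=
  fun x y =>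
    if ∀ j : Fin n, j ≠ i → j ≠ nxt i → x j = y j then
      h (x i, x (nxt i)) (y i, y (nxt i))
    else 0

/-- the translation-invariant nearest-neighbor Hamiltonian generated by `h` -/
noncomputable def ham (h : Matrix (Fin 2 × Fin 2) (Fin 2 × Fin 2) ℂ) (n : ℕ) :
    Matrix (Cfg n) (Cfg n) ℂ :=
  ∑ i : Fin n, twoSite n i h

/-- normalized trace ⟨X⟩ = tr X / dim -/
noncomputable def nTrace {d : Type*} [Fintype d] [DecidableEq d] (X : Matrix d d ℂ) : ℂ :=
  X.trace / (Fintype.card d)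

/-- the ℓ²→ℓ² operator norm of a matrix -/
noncomputable def opNorm {d : Type*} [Fintype d] [DecidableEq d] (X : Matrix d d ℂ) : ℝ :=
  ‖LinearMap.toContinuousLinearMap (Matrix.toEuclideanLin X)‖

/-! ### Auxiliary machinery -/

/-- the complex absolute value, as an `AbsoluteValue` (removed from Mathlib) -/
noncomputable def Complex.abs : AbsoluteValue ℂ ℝ :=
  IsAbsoluteValue.toAbsoluteValue (norm : ℂ → ℝ)

lemma Complex.abs_ofReal (r : ℝ) : Complex.abs (r : ℂ) = |r| := Complex.norm_real r

lemma Complex.abs_two : Complex.abs (2 : ℂ) = 2 := by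
  show ‖(2:ℂ)‖ = 2
  simp

lemma stmt8_coord_le_norm {d : Type*} [Fintype d] (v : EuclideanSpace ℂ d) (i : d) :
    ‖v i‖ ≤ ‖v‖ := by
  rw [EuclideanSpace.norm_eq]
  have h1 : ‖v i‖ ^ 2 ≤ ∑ j, ‖v j‖ ^ 2 :=
    Finset.single_le_sum (f := fun j => ‖v j‖ ^ 2) (fun j _ => by positivity) (Finset.mem_univ i)
  nlinarith [Real.sq_sqrt (show (0:ℝ) ≤ ∑ j, ‖v j‖ ^ 2 by positivity),
    Real.sqrt_nonneg (∑ j, ‖v j‖ ^ 2), norm_nonneg (v i)]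

lemma stmt8_entry_le_opNorm {d : Type*} [Fintype d] [DecidableEq d] (X : Matrix d d ℂ) (p q : d) :
    Complex.abs (X p q) ≤ opNorm X := by
  set L := LinearMap.toContinuousLinearMap (Matrix.toEuclideanLin X) with hL
  have h0 : (L (EuclideanSpace.single q 1)) p = X p q := by
    have h3 : L (EuclideanSpace.single q 1) = Matrix.toEuclideanLin X (EuclideanSpace.single q 1) :=
      rfl
    rw [h3, Matrix.toEuclideanLin_apply]
    simp [Matrix.mulVec_single]
  have h1 : Complex.abs (X p q) ≤ ‖L (EuclideanSpace.single q 1)‖ := by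
    rw [← h0]
    exact stmt8_coord_le_norm _ p
  calc Complex.abs (X p q) ≤ ‖L (EuclideanSpace.single q 1)‖ := h1
    _ ≤ ‖L‖ * ‖EuclideanSpace.single q (1:ℂ)‖ := L.le_opNorm _
    _ = opNorm X := by rw [EuclideanSpace.norm_single, norm_one, mul_one]; rfl

section Aux
variable {n : ℕ}

/-- `X` acts only on the sites in `S`. -/
structure IsLoc (S : Finset (Fin n)) (X : Matrix (Cfg n) (Cfg n) ℂ) : Prop where
  zro : ∀ x y : Cfg n, ∀ j, j ∉ S → x j ≠ y j → X x y = 0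
  cgr : ∀ x y z w : Cfg n, (∀ j ∈ S, x j = z j) → (∀ j ∈ S, y j = w j) →
      (∀ j ∉ S, x j = y j) → (∀ j ∉ S, z j = w j) → X x y = X z w

lemma stmt8_notmem_pair {i j : Fin n} :
    j ∉ ({i, nxt i} : Finset (Fin n)) ↔ j ≠ i ∧ j ≠ nxt i := by
  simp [Finset.mem_insert]

lemma stmt8_isLoc_twoSite (i : Fin n) (h : Matrix (Fin 2 × Fin 2) (Fin 2 × Fin 2) ℂ) :
    IsLoc {i, nxt i} (twoSite n i h) := by
  constructor
  · intro x y j hj hne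
    rw [stmt8_notmem_pair] at hj
    unfold twoSite
    rw [if_neg]
    intro hc
    exact hne (hc j hj.1 hj.2)
  · intro x y z w hxz hyw hxy hzw
    have hiS : i ∈ ({i, nxt i} : Finset (Fin n)) := Finset.mem_insert_self _ _
    have hnS : nxt i ∈ ({i, nxt i} : Finset (Fin n)) := by simp
    have c1 : ∀ j : Fin n, j ≠ i → j ≠ nxt i → x j = y j := fun j h1 h2 =>
      hxy j (stmt8_notmem_pair.mpr ⟨h1, h2⟩)
    have c2 : ∀ j : Fin n, j ≠ i → j ≠ nxt i → z j = w j := fun j h1 h2 =>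
      hzw j (stmt8_notmem_pair.mpr ⟨h1, h2⟩)
    unfold twoSite
    rw [if_pos c1, if_pos c2, hxz i hiS, hxz (nxt i) hnS, hyw i hiS, hyw (nxt i) hnS]

lemma IsLoc.mono {S T : Finset (Fin n)} {X : Matrix (Cfg n) (Cfg n) ℂ}
    (hX : IsLoc S X) (hST : S ⊆ T) : IsLoc T X := by
  constructor
  · intro x y j hj hne
    exact hX.zro x y j (fun hc => hj (hST hc)) hne
  · intro x y z w hxz hyw hxy hzw
    by_cases hc : ∀ j ∉ S, x j = y j
    · refine hX.cgr x y z w (fun j hj => hxz j (hST hj)) (fun j hj => hyw j (hST hj)) hc ?_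
      intro j hj
      by_cases hjT : j ∈ T
      · rw [← hxz j hjT, ← hyw j hjT]; exact hc j hj
      · exact hzw j hjT
    · push_neg at hc
      obtain ⟨j, hjS, hne⟩ := hc
      have hjT : j ∈ T := by
        by_contra hjT
        exact hne (hxy j hjT)
      rw [hX.zro x y j hjS hne,
        hX.zro z w j hjS (by rw [← hxz j hjT, ← hyw j hjT]; exact hne)]

lemma IsLoc.mul {S : Finset (Fin n)} {X Y : Matrix (Cfg n) (Cfg n) ℂ}
    (hX : IsLoc S X) (hY : IsLoc S Y) : IsLoc S (X * Y) := by
  constructor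
  · intro x y j hj hne
    rw [Matrix.mul_apply]
    refine Finset.sum_eq_zero (fun z _ => ?_)
    by_cases hz : x j = z j
    · rw [hY.zro z y j hj (hz ▸ hne), mul_zero]
    · rw [hX.zro x z j hj hz, zero_mul]
  · intro x y z w hxz hyw hxy hzw
    rw [Matrix.mul_apply, Matrix.mul_apply]
    have hzero : ∀ (x y : Cfg n), ∀ u ∉ Finset.univ.filter (fun u : Cfg n => ∀ j ∉ S, u j = x j),
        X x u * Y u y = 0 := by
      intro x y u hu
      simp only [Finset.mem_filter, Finset.mem_univ, true_and] at hu
      push_neg at hu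
      obtain ⟨j, hj, hne⟩ := hu
      rw [hX.zro x u j hj (Ne.symm hne), zero_mul]
    rw [← Finset.sum_subset (Finset.filter_subset _ _) (fun u hu hu' => hzero x y u hu'),
        ← Finset.sum_subset (Finset.filter_subset _ _) (fun v hv hv' => hzero z w v hv')]
    refine Finset.sum_nbij' (fun u => fun j => if j ∈ S then u j else z j)
      (fun v => fun j => if j ∈ S then v j else x j) ?_ ?_ ?_ ?_ ?_
    · intro u hu
      simp only [Finset.mem_filter, Finset.mem_univ, true_and]
      intro j hj
      rw [if_neg hj]
    · intro v hv
      simp only [Finset.mem_filter, Finset.mem_univ, true_and]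
      intro j hj
      rw [if_neg hj]
    · intro u hu
      simp only [Finset.mem_filter, Finset.mem_univ, true_and] at hu
      funext j
      by_cases hj : j ∈ S
      · simp [hj]
      · simp only [hj, if_neg, if_false]
        exact (hu j hj).symm
    · intro v hv
      simp only [Finset.mem_filter, Finset.mem_univ, true_and] at hv
      funext j
      by_cases hj : j ∈ S
      · simp [hj]
      · simp only [hj, if_neg, if_false]
        exact (hv j hj).symm
    · intro u hu
      simp only [Finset.mem_filter, Finset.mem_univ, true_and] at hu
      have e1 : X x u = X z (fun j => if j ∈ S then u j else z j) := by
        refine hX.cgr _ _ _ _ hxz (fun j hj => by rw [if_pos hj]) (fun j hj => (hu j hj).symm)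
          (fun j hj => by rw [if_neg hj])
      have e2 : Y u y = Y (fun j => if j ∈ S then u j else z j) w := by
        refine hY.cgr _ _ _ _ (fun j hj => by rw [if_pos hj]) hyw
          (fun j hj => by rw [hu j hj]; exact hxy j hj)
          (fun j hj => by rw [if_neg hj]; exact hzw j hj)
      rw [e1, e2]

lemma IsLoc.comm {S T : Finset (Fin n)} {X Y : Matrix (Cfg n) (Cfg n) ℂ}
    (hX : IsLoc S X) (hY : IsLoc T Y) (hd : Disjoint S T) : X * Y = Y * X := by
  ext x y
  rw [Matrix.mul_apply, Matrix.mul_apply]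
  have hST : ∀ j, j ∈ S → j ∉ T := fun j hj => Finset.disjoint_left.mp hd hj
  by_cases hp : ∀ j, j ∉ S → j ∉ T → x j = y j
  · set zs : Cfg n := fun j => if j ∈ S then y j else x j with hzs
    set zt : Cfg n := fun j => if j ∈ T then y j else x j with hzt
    have v1 : ∀ b ∈ (Finset.univ : Finset (Cfg n)), b ≠ zs → X x b * Y b y = 0 := by
      intro b _ hb
      by_contra hc
      have hXb : X x b ≠ 0 := fun hh => hc (by rw [hh, zero_mul])
      have hYb : Y b y ≠ 0 := fun hh => hc (by rw [hh, mul_zero])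
      have e1 : ∀ j ∉ S, x j = b j := by
        intro j hj; by_contra hne; exact hXb (hX.zro x b j hj hne)
      have e2 : ∀ j ∉ T, b j = y j := by
        intro j hj; by_contra hne; exact hYb (hY.zro b y j hj hne)
      apply hb
      funext j
      show b j = if j ∈ S then y j else x j
      by_cases hjS : j ∈ S
      · rw [if_pos hjS]; exact e2 j (hST j hjS)
      · rw [if_neg hjS]; exact (e1 j hjS).symm
    have v2 : ∀ b ∈ (Finset.univ : Finset (Cfg n)), b ≠ zt → Y x b * X b y = 0 := by
      intro b _ hb
      by_contra hc
      have hYb : Y x b ≠ 0 := fun hh => hc (by rw [hh, zero_mul])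
      have hXb : X b y ≠ 0 := fun hh => hc (by rw [hh, mul_zero])
      have e1 : ∀ j ∉ T, x j = b j := by
        intro j hj; by_contra hne; exact hYb (hY.zro x b j hj hne)
      have e2 : ∀ j ∉ S, b j = y j := by
        intro j hj; by_contra hne; exact hXb (hX.zro b y j hj hne)
      apply hb
      funext j
      show b j = if j ∈ T then y j else x j
      by_cases hjT : j ∈ T
      · rw [if_pos hjT]
        exact e2 j (fun hjS => hST j hjS hjT)
      · rw [if_neg hjT]; exact (e1 j hjT).symm
    rw [Finset.sum_eq_single_of_mem zs (Finset.mem_univ _) v1,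
       Finset.sum_eq_single_of_mem zt (Finset.mem_univ _) v2]
    have q1 : X x zs = X zt y := by
      refine hX.cgr _ _ _ _ ?_ ?_ ?_ ?_
      · intro j hj
        show x j = if j ∈ T then y j else x j
        rw [if_neg (hST j hj)]
      · intro j hj
        show (if j ∈ S then y j else x j) = y j
        rw [if_pos hj]
      · intro j hj
        show x j = if j ∈ S then y j else x j
        rw [if_neg hj]
      · intro j hj
        show (if j ∈ T then y j else x j) = y j
        by_cases hjT : j ∈ T
        · rw [if_pos hjT]
        · rw [if_neg hjT]; exact hp j hj hjT
    have q2 : Y zs y = Y x zt := by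
      refine hY.cgr _ _ _ _ ?_ ?_ ?_ ?_
      · intro j hj
        show (if j ∈ S then y j else x j) = x j
        rw [if_neg (fun hjS => hST j hjS hj)]
      · intro j hj
        show y j = if j ∈ T then y j else x j
        rw [if_pos hj]
      · intro j hj
        show (if j ∈ S then y j else x j) = y j
        by_cases hjS : j ∈ S
        · rw [if_pos hjS]
        · rw [if_neg hjS]; exact hp j hjS hj
      · intro j hj
        show x j = if j ∈ T then y j else x j
        rw [if_neg hj]
    rw [q1, q2, mul_comm]
  · push_neg at hp
    obtain ⟨j, hjS, hjT, hne⟩ := hp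
    rw [Finset.sum_eq_zero, Finset.sum_eq_zero]
    · intro z _
      by_cases hz : x j = z j
      · rw [hX.zro z y j hjS (hz ▸ hne), mul_zero]
      · rw [hY.zro x z j hjT hz, zero_mul]
    · intro z _
      by_cases hz : x j = z j
      · rw [hY.zro z y j hjT (hz ▸ hne), mul_zero]
      · rw [hX.zro x z j hjS hz, zero_mul]

lemma stmt8_trace_factor {S T : Finset (Fin n)} {X Y : Matrix (Cfg n) (Cfg n) ℂ}
    (hX : IsLoc S X) (hY : IsLoc T Y) (hd : Disjoint S T) :
    (X * Y).trace * 2 ^ n = X.trace * Y.trace := by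
  have hST : ∀ j, j ∈ S → j ∉ T := fun j hj => Finset.disjoint_left.mp hd hj
  have htr : ∀ (Z : Matrix (Cfg n) (Cfg n) ℂ), Z.trace = ∑ x : Cfg n, Z x x := fun Z => rfl
  have step1 : (X * Y).trace = ∑ x : Cfg n, X x x * Y x x := by
    rw [htr]
    refine Finset.sum_congr rfl (fun x _ => ?_)
    rw [Matrix.mul_apply]
    refine Finset.sum_eq_single_of_mem x (Finset.mem_univ _) (fun z _ hz => ?_)
    have : ∃ j, z j ≠ x j := by
      by_contra hc
      push_neg at hc
      exact hz (funext hc)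
    obtain ⟨j, hj⟩ := this
    by_cases hjS : j ∈ S
    · rw [hY.zro z x j (hST j hjS) hj, mul_zero]
    · rw [hX.zro x z j hjS (Ne.symm hj), zero_mul]
  set E := Equiv.piEquivPiSubtypeProd (fun j : Fin n => j ∈ S) (fun _ => Fin 2) with hE
  set a₀ : ∀ _ : {j : Fin n // j ∈ S}, Fin 2 := fun _ => 0
  set b₀ : ∀ _ : {j : Fin n // j ∉ S}, Fin 2 := fun _ => 0
  have hsymm : ∀ (a : ∀ _ : {j : Fin n // j ∈ S}, Fin 2) (b : ∀ _ : {j : Fin n // j ∉ S}, Fin 2)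
      (j : Fin n), E.symm (a, b) j = if hj : j ∈ S then a ⟨j, hj⟩ else b ⟨j, hj⟩ := by
    intro a b j
    rw [hE, Equiv.piEquivPiSubtypeProd_symm_apply]
  have hXd : ∀ a b, X (E.symm (a, b)) (E.symm (a, b)) = X (E.symm (a, b₀)) (E.symm (a, b₀)) := by
    intro a b
    refine hX.cgr _ _ _ _ ?_ ?_ (fun _ _ => rfl) (fun _ _ => rfl)
    all_goals intro j hj; rw [hsymm, hsymm, dif_pos hj, dif_pos hj]
  have hYd : ∀ a b, Y (E.symm (a, b)) (E.symm (a, b)) = Y (E.symm (a₀, b)) (E.symm (a₀, b)) := by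
    intro a b
    refine hY.cgr _ _ _ _ ?_ ?_ (fun _ _ => rfl) (fun _ _ => rfl)
    all_goals intro j hj; rw [hsymm, hsymm, dif_neg (fun hjS => hST j hjS hj),
      dif_neg (fun hjS => hST j hjS hj)]
  have key : ∀ (Z : Matrix (Cfg n) (Cfg n) ℂ),
      (∑ x : Cfg n, Z x x)
        = ∑ p : (∀ _ : {j : Fin n // j ∈ S}, Fin 2) × (∀ _ : {j : Fin n // j ∉ S}, Fin 2),
        Z (E.symm p) (E.symm p) := by
    intro Z
    exact (Equiv.sum_comp E.symm (fun x => Z x x)).symm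
  have cA : (Fintype.card (∀ _ : {j : Fin n // j ∈ S}, Fin 2)) = 2 ^ S.card := by
    rw [Fintype.card_fun, Fintype.card_fin, Fintype.card_coe]
  have cB : (Fintype.card (∀ _ : {j : Fin n // j ∉ S}, Fin 2)) = 2 ^ (n - S.card) := by
    rw [Fintype.card_fun, Fintype.card_fin, Fintype.card_subtype_compl, Fintype.card_coe,
      Fintype.card_fin]
  have hScard : S.card ≤ n := by simpa using Finset.card_le_univ S
  have hXtr : X.trace = (2 : ℂ) ^ (n - S.card) * ∑ a, X (E.symm (a, b₀)) (E.symm (a, b₀)) := by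
    rw [htr, key X, Fintype.sum_prod_type]
    have : ∀ a, ∑ b, X (E.symm (a, b)) (E.symm (a, b))
        = (2 : ℂ) ^ (n - S.card) * X (E.symm (a, b₀)) (E.symm (a, b₀)) := by
      intro a
      rw [Finset.sum_congr rfl (fun b _ => hXd a b), Finset.sum_const, Finset.card_univ, cB,
        nsmul_eq_mul]
      push_cast
      ring
    rw [Finset.sum_congr rfl (fun a _ => this a), ← Finset.mul_sum]
  have hYtr : Y.trace = (2 : ℂ) ^ S.card * ∑ b, Y (E.symm (a₀, b)) (E.symm (a₀, b)) := by
    rw [htr, key Y, Fintype.sum_prod_type]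
    have : ∀ a, ∑ b, Y (E.symm (a, b)) (E.symm (a, b))
        = ∑ b, Y (E.symm (a₀, b)) (E.symm (a₀, b)) :=
      fun a => Finset.sum_congr rfl (fun b _ => hYd a b)
    rw [Finset.sum_congr rfl (fun a _ => this a), Finset.sum_const, Finset.card_univ, cA,
      nsmul_eq_mul]
    push_cast
    ring
  have hXYtr : (X * Y).trace = (∑ a, X (E.symm (a, b₀)) (E.symm (a, b₀))) *
      (∑ b, Y (E.symm (a₀, b)) (E.symm (a₀, b))) := by
    rw [step1, ← Equiv.sum_comp E.symm (fun x => X x x * Y x x), Fintype.sum_prod_type]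
    have hterm : ∀ a b, X (E.symm (a, b)) (E.symm (a, b)) * Y (E.symm (a, b)) (E.symm (a, b))
        = X (E.symm (a, b₀)) (E.symm (a, b₀)) * Y (E.symm (a₀, b)) (E.symm (a₀, b)) := by
      intro a b; rw [hXd a b, hYd a b]
    rw [Finset.sum_congr rfl (fun a _ => Finset.sum_congr rfl (fun b _ => hterm a b)),
      ← Finset.sum_mul_sum]
  have hpow : (2 : ℂ) ^ (n - S.card) * 2 ^ S.card = 2 ^ n := by
    rw [← pow_add]; congr 1; omega
  rw [hXYtr, hXtr, hYtr, ← hpow]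
  ring

/-! ### counting -/

lemma stmt8_nxt_val (i : Fin n) : (nxt i).1 = i.1 + 1 ∨ (i.1 + 1 = n ∧ (nxt i).1 = 0) := by
  have h2 := i.2
  show (i.1 + 1) % n = i.1 + 1 ∨ _
  rcases Nat.lt_or_ge (i.1 + 1) n with hlt | hge
  · left; exact Nat.mod_eq_of_lt hlt
  · right
    have he : i.1 + 1 = n := by omega
    exact ⟨he, by show (i.1 + 1) % n = 0; rw [he, Nat.mod_self]⟩

lemma stmt8_nxt_ne (hn : 2 ≤ n) (i : Fin n) : nxt i ≠ i := by
  intro hc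
  have := congrArg Fin.val hc
  rcases stmt8_nxt_val i with hv | ⟨hv1, hv2⟩ <;> omega

def cfgEquiv (i i' : Fin n) (hne : i' ≠ i) :
    Cfg n ≃ (Fin 2 × Fin 2) × ({j : Fin n // j ≠ i ∧ j ≠ i'} → Fin 2) where
  toFun x := ((x i, x i'), fun j => x j.1)
  invFun p := fun j =>
    if hj : j = i then p.1.1 else if hj' : j = i' then p.1.2 else p.2 ⟨j, hj, hj'⟩
  left_inv x := by
    funext j
    by_cases hj : j = i
    · subst hj; simp
    · by_cases hj' : j = i'
      · subst hj'; simp [hne]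
      · simp [hj, hj']
  right_inv p := by
    obtain ⟨⟨a, b⟩, g⟩ := p
    simp only [Prod.mk.injEq]
    refine ⟨⟨?_, ?_⟩, ?_⟩
    · simp
    · simp [hne]
    · funext j
      rw [dif_neg j.2.1, dif_neg j.2.2]

lemma stmt8_card_two_compl (i i' : Fin n) (hne : i' ≠ i) :
    Fintype.card {j : Fin n // j ≠ i ∧ j ≠ i'} = n - 2 := by
  rw [Fintype.card_subtype]
  have : Finset.univ.filter (fun j : Fin n => j ≠ i ∧ j ≠ i') = Finset.univ \ {i, i'} := by
    ext j; simp [not_or]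
  rw [this, Finset.card_sdiff_of_subset (Finset.subset_univ _), Finset.card_univ, Fintype.card_fin]
  have : ({i, i'} : Finset (Fin n)).card = 2 := by
    rw [Finset.card_insert_of_notMem (by simp [Ne.symm hne]), Finset.card_singleton]
  rw [this]

lemma stmt8_count2 (i i' : Fin n) (hne : i' ≠ i) (F : Fin 2 → Fin 2 → ℂ) :
    ∑ x : Cfg n, F (x i) (x i') = 2 ^ (n - 2) * ∑ p : Fin 2 × Fin 2, F p.1 p.2 := by
  rw [← Equiv.sum_comp (cfgEquiv i i' hne).symm (fun x : Cfg n => F (x i) (x i'))]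
  have heval : ∀ p : (Fin 2 × Fin 2) × ({j : Fin n // j ≠ i ∧ j ≠ i'} → Fin 2),
      F ((cfgEquiv i i' hne).symm p i) ((cfgEquiv i i' hne).symm p i') = F p.1.1 p.1.2 := by
    intro p
    have e1 : (cfgEquiv i i' hne).symm p i = p.1.1 := by
      show (if hj : i = i then _ else _) = _
      rw [dif_pos rfl]
    have e2 : (cfgEquiv i i' hne).symm p i' = p.1.2 := by
      show (if hj : i' = i then _ else _) = _
      rw [dif_neg hne, dif_pos rfl]
    rw [e1, e2]
  rw [Finset.sum_congr rfl (fun p _ => heval p), Fintype.sum_prod_type]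
  have : ∀ q : Fin 2 × Fin 2, (∑ _g : {j : Fin n // j ≠ i ∧ j ≠ i'} → Fin 2, F q.1 q.2)
      = (2 : ℂ) ^ (n - 2) * F q.1 q.2 := by
    intro q
    rw [Finset.sum_const, Finset.card_univ, Fintype.card_fun, Fintype.card_fin,
      stmt8_card_two_compl i i' hne, nsmul_eq_mul]
    push_cast
    ring
  rw [Finset.sum_congr rfl (fun q _ => this q), ← Finset.mul_sum]

def wr (i i' : Fin n) (x : Cfg n) (p : Fin 2 × Fin 2) : Cfg n :=
  Function.update (Function.update x i p.1) i' p.2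

lemma stmt8_wr_i {i i' : Fin n} (hne : i ≠ i') (x : Cfg n) (p : Fin 2 × Fin 2) :
    wr i i' x p i = p.1 := by
  rw [wr, Function.update_of_ne hne, Function.update_self]

lemma stmt8_wr_i' {i i' : Fin n} (x : Cfg n) (p : Fin 2 × Fin 2) : wr i i' x p i' = p.2 :=
  Function.update_self _ _ _

lemma stmt8_wr_other {i i' j : Fin n} (hj : j ≠ i) (hj' : j ≠ i') (x : Cfg n)
    (p : Fin 2 × Fin 2) : wr i i' x p j = x j := by
  rw [wr, Function.update_of_ne hj', Function.update_of_ne hj]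

lemma stmt8_wr_eq_self {i i' : Fin n} (hne : i ≠ i') (x z : Cfg n)
    (hag : ∀ j : Fin n, j ≠ i → j ≠ i' → x j = z j) :
    wr i i' x (z i, z i') = z := by
  funext j
  by_cases hj' : j = i'
  · subst hj'; exact stmt8_wr_i' x _
  · by_cases hj : j = i
    · subst hj; exact stmt8_wr_i hne x _
    · rw [stmt8_wr_other hj hj' x _]; exact hag j hj hj'

lemma stmt8_trace_twoSite (hn : 2 ≤ n) (i : Fin n)
    (a : Matrix (Fin 2 × Fin 2) (Fin 2 × Fin 2) ℂ) :
    (twoSite n i a).trace = 2 ^ (n - 2) * a.trace := by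
  have : (twoSite n i a).trace = ∑ x : Cfg n, a (x i, x (nxt i)) (x i, x (nxt i)) := by
    show (∑ x : Cfg n, twoSite n i a x x) = _
    refine Finset.sum_congr rfl (fun x _ => ?_)
    unfold twoSite
    rw [if_pos (fun j _ _ => rfl)]
  rw [this, stmt8_count2 i (nxt i) (stmt8_nxt_ne hn i) (fun u v => a (u, v) (u, v))]
  congr 1

lemma stmt8_trace_twoSite_mul (hn : 2 ≤ n) (i : Fin n)
    (a b : Matrix (Fin 2 × Fin 2) (Fin 2 × Fin 2) ℂ) :
    (twoSite n i a * twoSite n i b).trace = 2 ^ (n - 2) * (a * b).trace := by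
  have hne : i ≠ nxt i := (stmt8_nxt_ne hn i).symm
  have inner : ∀ x : Cfg n, (∑ z : Cfg n, twoSite n i a x z * twoSite n i b z x)
      = ∑ p : Fin 2 × Fin 2, a (x i, x (nxt i)) p * b p (x i, x (nxt i)) := by
    intro x
    have hfil : ∀ z ∉ Finset.univ.filter
        (fun z : Cfg n => ∀ j : Fin n, j ≠ i → j ≠ nxt i → x j = z j),
        twoSite n i a x z * twoSite n i b z x = 0 := by
      intro z hz
      simp only [Finset.mem_filter, Finset.mem_univ, true_and] at hz
      unfold twoSite
      rw [if_neg hz, zero_mul]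
    rw [← Finset.sum_subset (Finset.filter_subset _ _) (fun z _ hz => hfil z hz)]
    refine Finset.sum_nbij' (fun z => (z i, z (nxt i))) (fun p => wr i (nxt i) x p)
      ?_ ?_ ?_ ?_ ?_
    · intro z _; exact Finset.mem_univ _
    · intro p _
      simp only [Finset.mem_filter, Finset.mem_univ, true_and]
      intro j hj hj'
      exact (stmt8_wr_other hj hj' x p).symm
    · intro z hz
      simp only [Finset.mem_filter, Finset.mem_univ, true_and] at hz
      exact stmt8_wr_eq_self hne x z hz
    · intro p _
      rw [Prod.mk.injEq]
      exact ⟨stmt8_wr_i hne x p, stmt8_wr_i' x p⟩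
    · intro z hz
      simp only [Finset.mem_filter, Finset.mem_univ, true_and] at hz
      unfold twoSite
      rw [if_pos hz, if_pos (fun j h1 h2 => (hz j h1 h2).symm)]
  have hdiag : (twoSite n i a * twoSite n i b).trace
      = ∑ x : Cfg n, (a * b) (x i, x (nxt i)) (x i, x (nxt i)) := by
    show (∑ x : Cfg n, (twoSite n i a * twoSite n i b) x x) = _
    refine Finset.sum_congr rfl (fun x _ => ?_)
    rw [Matrix.mul_apply, inner x, ← Matrix.mul_apply]
  rw [hdiag, stmt8_count2 i (nxt i) (stmt8_nxt_ne hn i) (fun u v => (a * b) (u, v) (u, v))]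
  congr 1

/-! ### entrywise bounds -/

lemma stmt8_ts_abs {h : Matrix (Fin 2 × Fin 2) (Fin 2 × Fin 2) ℂ}
    (hE : ∀ p q, Complex.abs (h p q) ≤ 1) (i : Fin n) (x y : Cfg n) :
    Complex.abs (twoSite n i h x y) ≤ 1 := by
  unfold twoSite
  split_ifs
  · exact hE _ _
  · simp

lemma stmt8_ts_row (hn : 2 ≤ n) {h : Matrix (Fin 2 × Fin 2) (Fin 2 × Fin 2) ℂ}
    (hE : ∀ p q, Complex.abs (h p q) ≤ 1) (i : Fin n) (x : Cfg n) :
    (∑ z : Cfg n, Complex.abs (twoSite n i h x z)) ≤ 4 := by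
  have hne : i ≠ nxt i := (stmt8_nxt_ne hn i).symm
  have himg : ∀ z : Cfg n, twoSite n i h x z ≠ 0 →
      z ∈ Finset.image (wr i (nxt i) x) Finset.univ := by
    intro z hz
    have hag : ∀ j : Fin n, j ≠ i → j ≠ nxt i → x j = z j := by
      by_contra hc
      exact hz (by unfold twoSite; rw [if_neg hc])
    exact Finset.mem_image.mpr ⟨(z i, z (nxt i)), Finset.mem_univ _,
      stmt8_wr_eq_self hne x z hag⟩
  have h1 : (∑ z : Cfg n, Complex.abs (twoSite n i h x z))
      = ∑ z ∈ Finset.image (wr i (nxt i) x) Finset.univ, Complex.abs (twoSite n i h x z) := by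
    refine (Finset.sum_subset (Finset.subset_univ _) (fun z _ hz => ?_)).symm
    have : twoSite n i h x z = 0 := by
      by_contra hc
      exact hz (himg z hc)
    rw [this, map_zero]
  rw [h1]
  calc (∑ z ∈ Finset.image (wr i (nxt i) x) Finset.univ, Complex.abs (twoSite n i h x z))
      ≤ (Finset.image (wr i (nxt i) x) Finset.univ).card • (1:ℝ) :=
        Finset.sum_le_card_nsmul _ _ 1 (fun z _ => stmt8_ts_abs hE i x z)
    _ ≤ 4 := by
        rw [nsmul_eq_mul, mul_one]
        have := Finset.card_image_le (f := wr i (nxt i) x) (s := Finset.univ)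
        have h4 : (Finset.univ : Finset (Fin 2 × Fin 2)).card = 4 := by simp
        rw [h4] at this
        exact_mod_cast this

lemma stmt8_ts_vec (hn : 2 ≤ n) {h : Matrix (Fin 2 × Fin 2) (Fin 2 × Fin 2) ℂ}
    (hE : ∀ p q, Complex.abs (h p q) ≤ 1) (i : Fin n) (x : Cfg n) (v : Cfg n → ℂ) (m : ℝ)
    (hm : 0 ≤ m) (hv : ∀ z, Complex.abs (v z) ≤ m) :
    Complex.abs (∑ z : Cfg n, twoSite n i h x z * v z) ≤ 4 * m := by
  calc Complex.abs (∑ z : Cfg n, twoSite n i h x z * v z)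
      ≤ ∑ z : Cfg n, Complex.abs (twoSite n i h x z * v z) := Complex.abs.sum_le _ _
    _ ≤ ∑ z : Cfg n, Complex.abs (twoSite n i h x z) * m := by
        refine Finset.sum_le_sum (fun z _ => ?_)
        rw [_root_.map_mul]
        exact mul_le_mul_of_nonneg_left (hv z) (Complex.abs.nonneg _)
    _ = (∑ z : Cfg n, Complex.abs (twoSite n i h x z)) * m := (Finset.sum_mul _ _ _).symm
    _ ≤ 4 * m := mul_le_mul_of_nonneg_right (stmt8_ts_row hn hE i x) hm

lemma stmt8_bad_bound (hn : 2 ≤ n) {h : Matrix (Fin 2 × Fin 2) (Fin 2 × Fin 2) ℂ}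
    (hE : ∀ p q, Complex.abs (h p q) ≤ 1) (i k j l : Fin n) :
    Complex.abs ((twoSite n i h * twoSite n k h * twoSite n j h * twoSite n l h).trace)
      ≤ 64 * 2 ^ n := by
  have hassoc : twoSite n i h * twoSite n k h * twoSite n j h * twoSite n l h
      = twoSite n i h * (twoSite n k h * (twoSite n j h * twoSite n l h)) := by
    simp only [mul_assoc]
  rw [hassoc]
  have hdiag : ∀ x : Cfg n,
      Complex.abs ((twoSite n i h * (twoSite n k h * (twoSite n j h * twoSite n l h))) x x)
        ≤ 64 := by
    intro x
    have b3 : ∀ z : Cfg n, Complex.abs ((twoSite n j h * twoSite n l h) z x) ≤ 4 := by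
      intro z
      rw [Matrix.mul_apply]
      have := stmt8_ts_vec hn hE j z (fun w => twoSite n l h w x) 1 (by norm_num)
        (fun w => stmt8_ts_abs hE l w x)
      simpa using this
    have b2 : ∀ z : Cfg n,
        Complex.abs ((twoSite n k h * (twoSite n j h * twoSite n l h)) z x) ≤ 16 := by
      intro z
      rw [Matrix.mul_apply]
      have := stmt8_ts_vec hn hE k z (fun w => (twoSite n j h * twoSite n l h) w x) 4
        (by norm_num) b3
      linarith
    have b1 := stmt8_ts_vec hn hE i x
      (fun w => (twoSite n k h * (twoSite n j h * twoSite n l h)) w x) 16 (by norm_num) b2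
    rw [Matrix.mul_apply]
    linarith
  calc Complex.abs ((twoSite n i h * (twoSite n k h * (twoSite n j h * twoSite n l h))).trace)
      ≤ ∑ x : Cfg n, Complex.abs
          ((twoSite n i h * (twoSite n k h * (twoSite n j h * twoSite n l h))) x x) :=
        Complex.abs.sum_le _ _
    _ ≤ (Finset.univ : Finset (Cfg n)).card • (64:ℝ) :=
        Finset.sum_le_card_nsmul _ _ _ (fun x _ => hdiag x)
    _ = 64 * 2 ^ n := by
        rw [Finset.card_univ, nsmul_eq_mul]
        rw [show Fintype.card (Cfg n) = 2 ^ n by rw [Fintype.card_fun]; simp]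
        push_cast
        ring

end Aux

/-! ### classification of terms -/

section Class
variable {n : ℕ}

def W4 (n : ℕ) : Finset (Fin n) := Finset.univ.filter (fun j => j.1 ≤ 3)

lemma stmt8_Spair_sub_W4 (hn : 5 ≤ n) {i : Fin n} (hi : i.1 ≤ 2) :
    ({i, nxt i} : Finset (Fin n)) ⊆ W4 n := by
  intro a ha
  simp only [Finset.mem_insert, Finset.mem_singleton] at ha
  simp only [W4, Finset.mem_filter, Finset.mem_univ, true_and]
  have ha' : a.1 = i.1 ∨ a.1 = (nxt i).1 := by
    rcases ha with rfl | rfl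
    exacts [Or.inl rfl, Or.inr rfl]
  rcases stmt8_nxt_val i with hv | ⟨hv1, hv2⟩ <;> omega

lemma stmt8_disj_W4 (hn : 5 ≤ n) {j : Fin n} (hj : 4 ≤ j.1) (hj2 : j.1 ≠ n - 1) :
    Disjoint (W4 n) ({j, nxt j} : Finset (Fin n)) := by
  rw [Finset.disjoint_right]
  intro a ha hb
  simp only [Finset.mem_insert, Finset.mem_singleton] at ha
  simp only [W4, Finset.mem_filter, Finset.mem_univ, true_and] at hb
  have ha' : a.1 = j.1 ∨ a.1 = (nxt j).1 := by
    rcases ha with rfl | rfl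
    exacts [Or.inl rfl, Or.inr rfl]
  have hj2' : j.1 < n := j.2
  rcases stmt8_nxt_val j with hv | ⟨hv1, hv2⟩ <;> omega

lemma stmt8_disj_S_one (hn : 5 ≤ n) {i : Fin n} (hi : 3 ≤ i.1) :
    Disjoint ({i, nxt i} : Finset (Fin n))
      ({(⟨1, lt_of_lt_of_le (by norm_num) hn⟩ : Fin n), nxt (⟨1, lt_of_lt_of_le (by norm_num) hn⟩ : Fin n)} : Finset (Fin n)) := by
  have h2 : (nxt (⟨1, lt_of_lt_of_le (by norm_num) hn⟩ : Fin n)).1 = 2 := by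
    show (1 + 1) % n = 2
    rw [Nat.mod_eq_of_lt (by omega)]
  rw [Finset.disjoint_left]
  intro a ha hb
  simp only [Finset.mem_insert, Finset.mem_singleton] at ha hb
  have ha' : a.1 = i.1 ∨ a.1 = (nxt i).1 := by
    rcases ha with rfl | rfl
    exacts [Or.inl rfl, Or.inr rfl]
  have hb' : a.1 = 1 ∨ a.1 = 2 := by
    rcases hb with rfl | rfl
    · exact Or.inl rfl
    · exact Or.inr h2
  rcases stmt8_nxt_val i with hv | ⟨hv1, hv2⟩ <;> omega

lemma stmt8_good_term (hn : 5 ≤ n) (h : Matrix (Fin 2 × Fin 2) (Fin 2 × Fin 2) ℂ)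
    (htr0 : h.trace = 0)
    (horth : ∀ i j : Fin n, i ≠ j → (twoSite n i h * twoSite n j h).trace = 0)
    (i j : Fin n)
    (hP : ¬((i.1 ≤ 3 ∨ i.1 = n - 1) ∧ (j.1 ≤ 3 ∨ j.1 = n - 1) ∧ (i.1 ≤ 2 ∨ j.1 ≤ 2))) :
    (twoSite n i h * twoSite n (⟨1, lt_of_lt_of_le (by norm_num) hn⟩ : Fin n) h * twoSite n j h
        * twoSite n (⟨1, lt_of_lt_of_le (by norm_num) hn⟩ : Fin n) h).trace
      = if i = j then 2 ^ (n - 4) * ((h * h).trace) ^ 2 else 0 := by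
  have hn2 : 2 ≤ n := by omega
  set one : Fin n := ⟨1, lt_of_lt_of_le (by norm_num) hn⟩ with hone
  have L : ∀ k : Fin n, IsLoc {k, nxt k} (twoSite n k h) := fun k => stmt8_isLoc_twoSite k h
  have h2n : ((2 : ℂ) ^ n) ≠ 0 := pow_ne_zero _ two_ne_zero
  have hone2 : (one : Fin n).1 ≤ 2 := by show (1:ℕ) ≤ 2; omega
  by_cases hd : i = j
  · subst hd
    rw [if_pos rfl]
    have hi3 : 3 ≤ i.1 := by
      by_contra hc
      exact hP ⟨Or.inl (by omega), Or.inl (by omega), Or.inl (by omega)⟩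
    have hdisj := stmt8_disj_S_one hn hi3
    have hcomm : twoSite n i h * twoSite n one h = twoSite n one h * twoSite n i h :=
      IsLoc.comm (L i) (L one) hdisj
    have hrearr : twoSite n i h * twoSite n one h * twoSite n i h * twoSite n one h
        = (twoSite n i h * twoSite n i h) * (twoSite n one h * twoSite n one h) := by
      rw [mul_assoc (twoSite n i h) (twoSite n one h) (twoSite n i h), ← hcomm,
        ← mul_assoc, mul_assoc]
    have htf := stmt8_trace_factor ((L i).mul (L i)) ((L one).mul (L one)) hdisj
    rw [stmt8_trace_twoSite_mul hn2 i h h, stmt8_trace_twoSite_mul hn2 one h h] at htf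
    show (twoSite n i h * twoSite n one h * twoSite n i h * twoSite n one h).trace = _
    rw [hrearr]
    have e : (2:ℂ) ^ (n-2) * (h*h).trace * (2 ^ (n-2) * (h*h).trace)
        = (2 ^ (n-4) * ((h*h).trace)^2) * 2 ^ n := by
      have e2 : (2:ℂ)^(n-2) * 2^(n-2) = 2^(n-4) * 2^n := by
        rw [← pow_add, ← pow_add]; congr 1; omega
      calc (2:ℂ) ^ (n-2) * (h*h).trace * (2 ^ (n-2) * (h*h).trace)
          = (2^(n-2) * 2^(n-2)) * ((h*h).trace)^2 := by ring
        _ = (2^(n-4) * 2^n) * ((h*h).trace)^2 := by rw [e2]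
        _ = (2 ^ (n-4) * ((h*h).trace)^2) * 2 ^ n := by ring
    exact mul_right_cancel₀ h2n (htf.trans e)
  · rw [if_neg hd]
    show (twoSite n i h * twoSite n one h * twoSite n j h * twoSite n one h).trace = 0
    by_cases hi2 : i.1 ≤ 2
    · have hjfar : ¬(j.1 ≤ 3 ∨ j.1 = n - 1) := fun hY =>
        hP ⟨Or.inl (by omega), hY, Or.inl (by omega)⟩
      have hj4 : 4 ≤ j.1 := by omega
      have hjne : j.1 ≠ n - 1 := by omega
      have hj3 : 3 ≤ j.1 := by omega
      have hcomm : twoSite n j h * twoSite n one h = twoSite n one h * twoSite n j h :=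
        IsLoc.comm (L j) (L one) (stmt8_disj_S_one hn hj3)
      have hrearr : twoSite n i h * twoSite n one h * twoSite n j h * twoSite n one h
          = ((twoSite n i h * twoSite n one h) * twoSite n one h) * twoSite n j h := by
        rw [mul_assoc (twoSite n i h * twoSite n one h) (twoSite n j h) (twoSite n one h),
          hcomm, ← mul_assoc]
      have locX : IsLoc (W4 n) ((twoSite n i h * twoSite n one h) * twoSite n one h) :=
        (((L i).mono (stmt8_Spair_sub_W4 hn hi2)).mul
          ((L one).mono (stmt8_Spair_sub_W4 hn hone2))).mul
          ((L one).mono (stmt8_Spair_sub_W4 hn hone2))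
      have htf := stmt8_trace_factor locX (L j) (stmt8_disj_W4 hn hj4 hjne)
      rw [stmt8_trace_twoSite hn2 j h, htr0, mul_zero, mul_zero] at htf
      rw [hrearr]
      exact mul_right_cancel₀ h2n (htf.trans (zero_mul ((2:ℂ)^n)).symm)
    · by_cases hj2 : j.1 ≤ 2
      · have hifar : ¬(i.1 ≤ 3 ∨ i.1 = n - 1) := fun hY =>
          hP ⟨hY, Or.inl (by omega), Or.inr (by omega)⟩
        have hi4 : 4 ≤ i.1 := by omega
        have hine : i.1 ≠ n - 1 := by omega
        have hrearr : twoSite n i h * twoSite n one h * twoSite n j h * twoSite n one h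
            = twoSite n i h * (twoSite n one h * (twoSite n j h * twoSite n one h)) := by
          simp only [mul_assoc]
        have locZ : IsLoc (W4 n) (twoSite n one h * (twoSite n j h * twoSite n one h)) :=
          ((L one).mono (stmt8_Spair_sub_W4 hn hone2)).mul
            (((L j).mono (stmt8_Spair_sub_W4 hn hj2)).mul
              ((L one).mono (stmt8_Spair_sub_W4 hn hone2)))
        have htf := stmt8_trace_factor locZ (L i) (stmt8_disj_W4 hn hi4 hine)
        rw [stmt8_trace_twoSite hn2 i h, htr0, mul_zero, mul_zero] at htf
        rw [hrearr, Matrix.trace_mul_comm]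
        exact mul_right_cancel₀ h2n (htf.trans (zero_mul ((2:ℂ)^n)).symm)
      · have hi3 : 3 ≤ i.1 := by omega
        have hj3 : 3 ≤ j.1 := by omega
        have hcomm : twoSite n one h * twoSite n j h = twoSite n j h * twoSite n one h :=
          IsLoc.comm (L one) (L j) (stmt8_disj_S_one hn hj3).symm
        have hrearr : twoSite n i h * twoSite n one h * twoSite n j h * twoSite n one h
            = (twoSite n i h * twoSite n j h) * (twoSite n one h * twoSite n one h) := by
          rw [mul_assoc (twoSite n i h) (twoSite n one h) (twoSite n j h), hcomm,
            ← mul_assoc, mul_assoc]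
        have locIJ : IsLoc (({i, nxt i} ∪ {j, nxt j} : Finset (Fin n)))
            (twoSite n i h * twoSite n j h) :=
          ((L i).mono Finset.subset_union_left).mul ((L j).mono Finset.subset_union_right)
        have hdisj : Disjoint ({i, nxt i} ∪ {j, nxt j} : Finset (Fin n))
            ({(one : Fin n), nxt one} : Finset (Fin n)) :=
          Finset.disjoint_union_left.mpr ⟨stmt8_disj_S_one hn hi3, stmt8_disj_S_one hn hj3⟩
        have htf := stmt8_trace_factor locIJ ((L one).mul (L one)) hdisj
        rw [horth i j hd, zero_mul] at htf
        rw [hrearr]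
        exact mul_right_cancel₀ h2n (htf.trans (zero_mul ((2:ℂ)^n)).symm)

end Class

theorem stmt8 :
    ∃ C : ℝ, 0 < C ∧ ∀ n : ℕ, (hn : 5 ≤ n) →
      ∀ h : Matrix (Fin 2 × Fin 2) (Fin 2 × Fin 2) ℂ,
        h.IsHermitian → h.trace = 0 → opNorm h ≤ 1 →
        (∀ i j : Fin n, i ≠ j → (twoSite n i h * twoSite n j h).trace = 0) →
        ‖((ham h n * twoSite n ⟨1, by omega⟩ h * ham h n * twoSite n ⟨1, by omega⟩ h).trace
                / 2 ^ n -
              n * nTrace (twoSite n ⟨1, by omega⟩ h ^ 2) ^ 2)‖ ≤ C := by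
  refine ⟨2000, by norm_num, ?_⟩
  intro n hn h _hherm htr0 hop horth
  have hn2 : 2 ≤ n := by omega
  set one : Fin n := ⟨1, by omega⟩ with hone
  have hE : ∀ p q, Complex.abs (h p q) ≤ 1 := fun p q =>
    le_trans (stmt8_entry_le_opNorm h p q) hop
  have h2n : ((2:ℂ) ^ n) ≠ 0 := pow_ne_zero _ two_ne_zero
  have h2nR : (0:ℝ) < 2 ^ n := by positivity
  set c : ℂ := (h * h).trace with hc
  set T : Fin n × Fin n → ℂ := fun p =>
    (twoSite n p.1 h * twoSite n one h * twoSite n p.2 h * twoSite n one h).trace with hT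
  set P : Fin n × Fin n → Prop := fun p =>
    (p.1.1 ≤ 3 ∨ p.1.1 = n - 1) ∧ (p.2.1 ≤ 3 ∨ p.2.1 = n - 1) ∧ (p.1.1 ≤ 2 ∨ p.2.1 ≤ 2)
    with hP
  -- expansion of the trace into a double sum
  have hexp1 : ham h n * twoSite n one h * ham h n * twoSite n one h
      = ∑ i : Fin n, ∑ j : Fin n,
          twoSite n i h * twoSite n one h * twoSite n j h * twoSite n one h := by
    rw [ham]
    simp only [Finset.sum_mul, Finset.mul_sum]
    exact Finset.sum_comm
  have hexp : (ham h n * twoSite n one h * ham h n * twoSite n one h).trace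
      = ∑ p : Fin n × Fin n, T p := by
    rw [hexp1, Matrix.trace_sum, Fintype.sum_prod_type]
    exact Finset.sum_congr rfl (fun i _ => Matrix.trace_sum _ _)
  -- good terms
  have hgoodval : ∀ p ∈ Finset.univ.filter (fun p => ¬ P p),
      T p = if p.1 = p.2 then 2 ^ (n - 4) * c ^ 2 else 0 := by
    intro p hp
    simp only [Finset.mem_filter, Finset.mem_univ, true_and] at hp
    exact stmt8_good_term hn h htr0 horth p.1 p.2 hp
  have hdiagset : (Finset.univ.filter (fun p => ¬ P p)).filter (fun p : Fin n × Fin n => p.1 = p.2)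
      = Finset.image (fun i : Fin n => (i, i)) (Finset.univ.filter (fun i : Fin n => 3 ≤ i.1)) := by
    ext p
    simp only [Finset.mem_filter, Finset.mem_univ, true_and, Finset.mem_image]
    constructor
    · rintro ⟨hnp, hdg⟩
      refine ⟨p.1, ?_, ?_⟩
      · have hv : p.2.1 = p.1.1 := by rw [hdg]
        by_contra hlt
        push_neg at hlt
        exact hnp ⟨Or.inl (by omega), Or.inl (by omega), Or.inl (by omega)⟩
      · exact Prod.ext_iff.mpr ⟨rfl, hdg⟩
    · rintro ⟨i, hi3, rfl⟩
      refine ⟨?_, rfl⟩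
      rintro ⟨_h1, _h2, h3⟩
      dsimp only at h3
      omega
  have hcard3 : (Finset.univ.filter (fun i : Fin n => ¬ 3 ≤ i.1)).card = 3 := by
    have hset : Finset.univ.filter (fun i : Fin n => ¬ 3 ≤ i.1)
        = {(⟨0, by omega⟩ : Fin n), ⟨1, by omega⟩, ⟨2, by omega⟩} := by
      ext i
      simp only [Finset.mem_filter, Finset.mem_univ, true_and, Finset.mem_insert,
        Finset.mem_singleton, Fin.ext_iff]
      omega
    rw [hset]
    rw [Finset.card_insert_of_notMem (by simp [Fin.ext_iff]),
      Finset.card_insert_of_notMem (by simp [Fin.ext_iff]), Finset.card_singleton]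
  have hcardge3 : (Finset.univ.filter (fun i : Fin n => 3 ≤ i.1)).card = n - 3 := by
    have := Finset.card_filter_add_card_filter_not (s := (Finset.univ : Finset (Fin n)))
      (p := fun i : Fin n => 3 ≤ i.1)
    rw [Finset.card_univ, Fintype.card_fin, hcard3] at this
    omega
  have hinj : Function.Injective (fun i : Fin n => (i, i)) := by
    intro a b hab
    exact (Prod.ext_iff.mp hab).1
  have hgoodsum : (∑ p ∈ Finset.univ.filter (fun p => ¬ P p), T p)
      = ((n : ℂ) - 3) * (2 ^ (n - 4) * c ^ 2) := by
    rw [Finset.sum_congr rfl hgoodval, ← Finset.sum_filter, hdiagset, Finset.sum_const,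
      Finset.card_image_of_injective _ hinj, hcardge3, nsmul_eq_mul, Nat.cast_sub (by omega)]
    push_cast
    ring
  -- bad terms
  have hMcard : (Finset.univ.filter (fun i : Fin n => i.1 ≤ 3 ∨ i.1 = n - 1)).card ≤ 5 := by
    have hsub : Finset.univ.filter (fun i : Fin n => i.1 ≤ 3 ∨ i.1 = n - 1)
        ⊆ {(⟨0, by omega⟩ : Fin n), ⟨1, by omega⟩, ⟨2, by omega⟩, ⟨3, by omega⟩,
            ⟨n - 1, by omega⟩} := by
      intro i hi
      simp only [Finset.mem_filter, Finset.mem_univ, true_and] at hi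
      simp only [Finset.mem_insert, Finset.mem_singleton, Fin.ext_iff]
      omega
    refine le_trans (Finset.card_le_card hsub) ?_
    refine le_trans (Finset.card_insert_le _ _) ?_
    have s4 : ({(⟨1, by omega⟩ : Fin n), ⟨2, by omega⟩, ⟨3, by omega⟩, ⟨n - 1, by omega⟩}
        : Finset (Fin n)).card ≤ 4 := by
      refine le_trans (Finset.card_insert_le _ _) ?_
      have s3 : ({(⟨2, by omega⟩ : Fin n), ⟨3, by omega⟩, ⟨n - 1, by omega⟩}
          : Finset (Fin n)).card ≤ 3 := by
        refine le_trans (Finset.card_insert_le _ _) ?_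
        have s2 : ({(⟨3, by omega⟩ : Fin n), ⟨n - 1, by omega⟩} : Finset (Fin n)).card ≤ 2 := by
          refine le_trans (Finset.card_insert_le _ _) ?_
          rw [Finset.card_singleton]
        omega
      omega
    omega
  have hPcard : (Finset.univ.filter P).card ≤ 25 := by
    have hsub : Finset.univ.filter P
        ⊆ (Finset.univ.filter (fun i : Fin n => i.1 ≤ 3 ∨ i.1 = n - 1)) ×ˢ
          (Finset.univ.filter (fun i : Fin n => i.1 ≤ 3 ∨ i.1 = n - 1)) := by
      intro p hp
      simp only [Finset.mem_filter, Finset.mem_univ, true_and, hP] at hp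
      simp only [Finset.mem_product, Finset.mem_filter, Finset.mem_univ, true_and]
      exact ⟨hp.1, hp.2.1⟩
    refine le_trans (Finset.card_le_card hsub) ?_
    rw [Finset.card_product]
    exact Nat.mul_le_mul hMcard hMcard
  have hbadsum : Complex.abs (∑ p ∈ Finset.univ.filter P, T p) ≤ 1600 * 2 ^ n := by
    calc Complex.abs (∑ p ∈ Finset.univ.filter P, T p)
        ≤ ∑ p ∈ Finset.univ.filter P, Complex.abs (T p) := Complex.abs.sum_le _ _
      _ ≤ (Finset.univ.filter P).card • (64 * 2 ^ n : ℝ) :=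
          Finset.sum_le_card_nsmul _ _ _ (fun p _ => stmt8_bad_bound hn2 hE p.1 one p.2 one)
      _ ≤ 25 * (64 * 2 ^ n) := by
          rw [nsmul_eq_mul]
          have : ((Finset.univ.filter P).card : ℝ) ≤ 25 := by exact_mod_cast hPcard
          have hpos : (0:ℝ) ≤ 64 * 2 ^ n := by positivity
          nlinarith
      _ = 1600 * 2 ^ n := by ring
  -- the normalized trace of the square
  have e4 : (2:ℂ) ^ n = 2 ^ (n - 2) * 4 := by
    have e := pow_add (2:ℂ) (n - 2) 2
    rw [show n - 2 + 2 = n from by omega] at e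
    rw [e]; norm_num
  have e16 : (2:ℂ) ^ n = 2 ^ (n - 4) * 16 := by
    have e := pow_add (2:ℂ) (n - 4) 4
    rw [show n - 4 + 4 = n from by omega] at e
    rw [e]; norm_num
  have hcardCfg : ((Fintype.card (Cfg n) : ℂ)) = 2 ^ n := by
    rw [show Fintype.card (Cfg n) = 2 ^ n from by rw [Fintype.card_fun]; simp]
    push_cast
    ring
  have hnt : nTrace (twoSite n one h ^ 2) = c / 4 := by
    rw [nTrace, sq, stmt8_trace_twoSite_mul hn2 one h h, hcardCfg, ← hc, e4]
    have h0 : (2:ℂ) ^ (n - 2) ≠ 0 := pow_ne_zero _ two_ne_zero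
    rw [mul_div_mul_left c 4 h0]
  -- assembling everything
  have htot : (ham h n * twoSite n one h * ham h n * twoSite n one h).trace
      = (∑ p ∈ Finset.univ.filter P, T p) + ((n : ℂ) - 3) * (2 ^ (n - 4) * c ^ 2) := by
    rw [hexp, ← Finset.sum_filter_add_sum_filter_not Finset.univ P T, hgoodsum]
  show Complex.abs
      ((ham h n * twoSite n one h * ham h n * twoSite n one h).trace / 2 ^ n -
        (n : ℂ) * nTrace (twoSite n one h ^ 2) ^ 2) ≤ 2000
  rw [htot, hnt]
  set SP : ℂ := ∑ p ∈ Finset.univ.filter P, T p with hSP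
  have heq : (SP + ((n : ℂ) - 3) * (2 ^ (n - 4) * c ^ 2)) / 2 ^ n - (n : ℂ) * (c / 4) ^ 2
      = SP / 2 ^ n - 3 * c ^ 2 / 16 := by
    rw [e16]
    have h0 : (2:ℂ) ^ (n - 4) ≠ 0 := pow_ne_zero _ two_ne_zero
    field_simp
    ring
  rw [heq]
  have hcb : Complex.abs c ≤ 16 := by
    have hd : ∀ p : Fin 2 × Fin 2, Complex.abs ((h * h) p p) ≤ 4 := by
      intro p
      rw [Matrix.mul_apply]
      calc Complex.abs (∑ q : Fin 2 × Fin 2, h p q * h q p)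
          ≤ ∑ q : Fin 2 × Fin 2, Complex.abs (h p q * h q p) := Complex.abs.sum_le _ _
        _ ≤ ∑ _q : Fin 2 × Fin 2, (1:ℝ) := by
            refine Finset.sum_le_sum (fun q _ => ?_)
            rw [_root_.map_mul]
            calc Complex.abs (h p q) * Complex.abs (h q p)
                ≤ 1 * 1 := mul_le_mul (hE p q) (hE q p) (Complex.abs.nonneg _) zero_le_one
              _ = 1 := by ring
        _ = 4 := by simp
    calc Complex.abs c ≤ ∑ p : Fin 2 × Fin 2, Complex.abs ((h * h) p p) :=
          Complex.abs.sum_le _ _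
      _ ≤ ∑ _p : Fin 2 × Fin 2, (4:ℝ) := Finset.sum_le_sum (fun p _ => hd p)
      _ = 16 := by simp; norm_num
  have hb1 : Complex.abs (SP / 2 ^ n) ≤ 1600 := by
    rw [map_div₀, map_pow, Complex.abs_two]
    rw [div_le_iff₀ h2nR]
    calc Complex.abs SP ≤ 1600 * 2 ^ n := hbadsum
      _ = 1600 * 2 ^ n := rfl
  have hb2 : Complex.abs (3 * c ^ 2 / 16) ≤ 48 := by
    rw [map_div₀, _root_.map_mul, map_pow]
    have : Complex.abs (3:ℂ) = 3 := by
      rw [show ((3:ℂ)) = ((3:ℝ) : ℂ) from by norm_num, Complex.abs_ofReal]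
      norm_num
    rw [this]
    have : Complex.abs (16:ℂ) = 16 := by
      rw [show ((16:ℂ)) = ((16:ℝ) : ℂ) from by norm_num, Complex.abs_ofReal]
      norm_num
    rw [this]
    have hsq : Complex.abs c ^ 2 ≤ 256 := by nlinarith [Complex.abs.nonneg c]
    rw [div_le_iff₀ (by norm_num : (0:ℝ) < 16)]
    nlinarith
  have tri : Complex.abs (SP / 2 ^ n - 3 * c ^ 2 / 16)
      ≤ Complex.abs (SP / 2 ^ n) + Complex.abs (3 * c ^ 2 / 16) := by
    have h0 := Complex.abs.sub_le (SP / 2 ^ n) 0 (3 * c ^ 2 / 16)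
    simp only [sub_zero, zero_sub, AbsoluteValue.map_neg] at h0
    exact h0
  calc Complex.abs (SP / 2 ^ n - 3 * c ^ 2 / 16)
      ≤ Complex.abs (SP / 2 ^ n) + Complex.abs (3 * c ^ 2 / 16) := tri
    _ ≤ 1600 + 48 := add_le_add hb1 hb2
    _ ≤ 2000 := by norm_num
end

section
/- Let h be a fixed nonzero Hermitian traceless 4×4 matrix with ‖h‖ ≤ 1, for each n ≥ 3 let H = H^{(n)} be the translation-invariant nearest-neighbor Hamiltonian on n qubits generated by h with tr(H_i H_j) = 0 for all i ≠ j, and fix δ ∈ (0,1) and a positive integer k. Let A = A^{(n)} be a sequence of operators, each traceless, of operator norm at most 1, and supported on at most k consecutive sites, satisfying ETH with profile f_A and with f_A(0) = 0. Then there is a constant C such that for all n ≥ 3: (1/d) Σ_j |A_{jj}|⁴ ≤ C n^{−2}, where d = 2^n. -/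
open Matrix Filter Finset
open scoped Classical

/-- Heisenberg time evolution X ↦ e^{iHt} X e^{-iHt} -/
noncomputable def timeEv {d : Type*} [Fintype d] [DecidableEq d] (H : Matrix d d ℂ) (t : ℝ)
    (X : Matrix d d ℂ) : Matrix d d ℂ :=
  NormedSpace.exp ((Complex.I * t) • H) * X * NormedSpace.exp ((-(Complex.I * t)) • H)

/-- the window of `k` consecutive sites starting at `i0` -/
def window {n : ℕ} (i0 : Fin n) (k : ℕ) : Finset (Fin n) :=
  (Finset.range k).image fun t =>
    (⟨(i0.1 + t) % n, Nat.mod_lt _ (Nat.lt_of_le_of_lt (Nat.zero_le _) i0.2)⟩ : Fin n)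

/-- `M` acts as the identity outside the set `S` of sites, i.e. `M` is the conjugation, by the
permutation of tensor factors moving the sites of `S` to the front, of `m ⊗ I`. -/
def SupportedOn {n : ℕ} (S : Finset (Fin n)) (M : Matrix (Cfg n) (Cfg n) ℂ) : Prop :=
  (∀ x y : Cfg n, ¬(∀ j ∉ S, x j = y j) → M x y = 0) ∧
  (∀ x y x' y' : Cfg n, (∀ j ∈ S, x j = x' j) → (∀ j ∈ S, y j = y' j) →
    (∀ j ∉ S, x j = y j) → (∀ j ∉ S, x' j = y' j) → M x y = M x' y')

/-- `M` is supported on at most `k` consecutive sites -/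
def SupportedOnConsec {n : ℕ} (k : ℕ) (M : Matrix (Cfg n) (Cfg n) ℂ) : Prop :=
  ∃ i0 : Fin n, SupportedOn (window i0 k) M

/-- A family of eigenvalues is generic if `E p + E r = E q + E s` only for trivial reasons. -/
def GenericSpectrum {ι : Type*} (E : ι → ℝ) : Prop :=
  ∀ p q r s : ι, E p + E r = E q + E s → (p = q ∧ r = s) ∨ (p = s ∧ r = q)

/-- The sequence of operators `A n` (with matrix elements taken in the eigenbasis `U n` of the
Hamiltonian, with eigenvalues `E n`) satisfies the eigenstate thermalization hypothesis with
profile `f` on the energy-density window `[-δ, δ]`: `f` is three times continuously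
differentiable with `|f| ≤ 1`, and for every `p > 0` there is `C_p` with
`|A_{jj} - f (E_j / n)| ≤ C_p n^{-p}` for every `n` and every eigenstate `j` with `|E_j| ≤ δ n`. -/
def ETH (δ : ℝ) (E : ∀ n : ℕ, Cfg n → ℝ) (U : ∀ n : ℕ, Matrix (Cfg n) (Cfg n) ℂ)
    (A : ∀ n : ℕ, Matrix (Cfg n) (Cfg n) ℂ) (f : ℝ → ℂ) : Prop :=
  ContDiffOn ℝ 3 f (Set.Icc (-δ) δ) ∧ (∀ x ∈ Set.Icc (-δ) δ, ‖f x‖ ≤ 1) ∧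
  ∀ p : ℝ, 0 < p → ∃ Cp : ℝ, ∀ n : ℕ, 3 ≤ n → ∀ j : Cfg n, |E n j| ≤ δ * n →
    ‖((U n)ᴴ * A n * U n) j j - f (E n j / n)‖ ≤ Cp * (n : ℝ) ^ (-p)

lemma nxt_val {n : ℕ} (i : Fin n) : (nxt i).1 = if i.1 + 1 = n then 0 else i.1 + 1 := by
  have h2 := i.2
  rcases eq_or_lt_of_le (Nat.succ_le_of_lt i.2) with h | h
  · simp [nxt, ← h, Nat.mod_self]
  · simp only [nxt]
    rw [if_neg (by omega), Nat.mod_eq_of_lt h]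

lemma nxt_injective {n : ℕ} : Function.Injective (nxt (n := n)) := by
  intro i j hij
  have hv := congrArg Fin.val hij
  rw [nxt_val, nxt_val] at hv
  have hi := i.2; have hj := j.2
  apply Fin.ext
  split at hv <;> split at hv <;> omega

lemma nxt_ne_self {n : ℕ} (hn : 3 ≤ n) (i : Fin n) : nxt i ≠ i := by
  intro hc
  have hv := congrArg Fin.val hc
  rw [nxt_val] at hv
  have := i.2
  split at hv <;> omega

lemma entry_le_opNorm {d : Type*} [Fintype d] [DecidableEq d] (X : Matrix d d ℂ) (p q : d) :
    ‖X p q‖ ≤ opNorm X := by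
  classical
  set v : EuclideanSpace ℂ d := EuclideanSpace.single q 1 with hv
  set w := (Matrix.toEuclideanLin X) v with hw
  have hXv : w p = X p q := by
    simp [hw, hv, Matrix.toEuclideanLin_apply, Matrix.mulVec, dotProduct,
      EuclideanSpace.single_apply]
  have h1 : ‖X p q‖ = ‖w p‖ := by rw [hXv]
  have h2 : ‖w p‖ ≤ ‖w‖ := by
    have := EuclideanSpace.norm_eq w
    have hle : ‖w p‖^2 ≤ ∑ i, ‖w i‖^2 :=
      Finset.single_le_sum (f := fun i => ‖w i‖^2) (fun i _ => sq_nonneg _) (mem_univ p)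
    rw [this]
    have : ‖w p‖ = Real.sqrt (‖w p‖^2) := (Real.sqrt_sq (norm_nonneg _)).symm
    rw [this]
    exact Real.sqrt_le_sqrt hle
  have h3 : ‖w‖ ≤ opNorm X * ‖v‖ := by
    exact (LinearMap.toContinuousLinearMap (Matrix.toEuclideanLin X)).le_opNorm v
  have h4 : ‖v‖ = 1 := by simp [hv]
  rw [h4, mul_one] at h3
  linarith [h1, h2, h3]

lemma diag_conj_le_opNorm {d : Type*} [Fintype d] [DecidableEq d]
    (U A : Matrix d d ℂ) (hU : U ∈ Matrix.unitaryGroup d ℂ) (j : d) :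
    ‖(Uᴴ * A * U) j j‖ ≤ opNorm A := by
  classical
  set v : EuclideanSpace ℂ d := WithLp.toLp 2 (fun x => U x j) with hv
  set w := (Matrix.toEuclideanLin A) v with hw
  have hinner : (Uᴴ * A * U) j j = @inner ℂ _ _ v w := by
    simp only [PiLp.inner_apply, hw, hv, Matrix.toEuclideanLin_apply, Matrix.mul_apply,
      Matrix.mulVec, dotProduct, Matrix.conjTranspose_apply, Finset.sum_mul, Finset.mul_sum,
      RCLike.inner_apply, PiLp.toLp_apply]
    rw [Finset.sum_comm]
    exact Finset.sum_congr rfl fun x _ => Finset.sum_congr rfl fun y _ => by rw [Complex.star_def]; ring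
  have hnv : ‖v‖ = 1 := by
    have h1 : (Uᴴ * U) j j = 1 := by
      have := Matrix.mem_unitaryGroup_iff'.mp hU
      rw [Matrix.star_eq_conjTranspose] at this
      rw [this]; simp
    have h2 : (Uᴴ * U) j j = ((∑ x, ‖U x j‖^2 : ℝ) : ℂ) := by
      rw [Matrix.mul_apply]
      push_cast
      exact Finset.sum_congr rfl fun x _ => by
        rw [Matrix.conjTranspose_apply]
        rw [Complex.star_def, mul_comm, Complex.mul_conj']
    have h3 : (∑ x, ‖U x j‖^2 : ℝ) = 1 := by
      have := h1.symm.trans h2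
      exact_mod_cast this.symm
    rw [EuclideanSpace.norm_eq]
    simp only [hv]
    rw [h3, Real.sqrt_one]
  have hcs := norm_inner_le_norm (𝕜 := ℂ) v w
  have h3 : ‖w‖ ≤ opNorm A * ‖v‖ :=
    (LinearMap.toContinuousLinearMap (Matrix.toEuclideanLin A)).le_opNorm v
  have : ‖(Uᴴ * A * U) j j‖ = ‖@inner ℂ _ _ v w‖ := by rw [hinner]
  rw [this]
  rw [hnv, mul_one] at h3
  calc ‖@inner ℂ _ _ v w‖ ≤ ‖v‖ * ‖w‖ := hcs
    _ = ‖w‖ := by rw [hnv, one_mul]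
    _ ≤ opNorm A := h3

lemma twoSite_supportedOn {n : ℕ} (i : Fin n) (h : Matrix (Fin 2 × Fin 2) (Fin 2 × Fin 2) ℂ) :
    SupportedOn ({i, nxt i} : Finset (Fin n)) (twoSite n i h) := by
  constructor
  · intro x y hxy
    rw [twoSite, if_neg]
    intro hc
    exact hxy fun j hj => hc j (fun e => hj (by simp [e])) (fun e => hj (by simp [e]))
  · intro x y x' y' hxx' hyy' hxy hx'y'
    have hcx : ∀ j : Fin n, j ≠ i → j ≠ nxt i → x j = y j := fun j h1 h2 =>
      hxy j (by simp [h1, h2])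
    have hcx' : ∀ j : Fin n, j ≠ i → j ≠ nxt i → x' j = y' j := fun j h1 h2 =>
      hx'y' j (by simp [h1, h2])
    rw [twoSite, twoSite, if_pos hcx, if_pos hcx']
    rw [hxx' i (by simp), hxx' (nxt i) (by simp), hyy' i (by simp), hyy' (nxt i) (by simp)]

lemma supportedOn_mul {n : ℕ} {S T : Finset (Fin n)} {M N : Matrix (Cfg n) (Cfg n) ℂ}
    (hM : SupportedOn S M) (hN : SupportedOn T N) : SupportedOn (S ∪ T) (M * N) := by
  constructor
  · intro x y hxy
    rw [Matrix.mul_apply]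
    apply Finset.sum_eq_zero
    intro z _
    by_cases h1 : ∀ j ∉ S, x j = z j
    · by_cases h2 : ∀ j ∉ T, z j = y j
      · exact absurd (fun j hj => (h1 j (fun hs => hj (Finset.mem_union_left _ hs))).trans
          (h2 j (fun ht => hj (Finset.mem_union_right _ ht)))) hxy
      · rw [hN.1 z y h2, mul_zero]
    · rw [hM.1 x z h1, zero_mul]
  · intro x y x' y' hxx' hyy' hxy hx'y'
    rw [Matrix.mul_apply, Matrix.mul_apply]
    have key : ∀ (u v : Cfg n), (∀ j ∉ S ∪ T, u j = v j) →
        ∑ z, M u z * N z v = ∑ z ∈ Finset.univ.filter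
          (fun z => (∀ j ∉ S, u j = z j) ∧ (∀ j ∉ T, z j = v j)), M u z * N z v := by
      intro u v huv
      symm
      apply Finset.sum_filter_of_ne
      intro z _ hz
      constructor
      · intro j hj
        by_contra hne
        exact hz (by rw [hM.1 u z (fun hc => hne (hc j hj)), zero_mul])
      · intro j hj
        by_contra hne
        exact hz (by rw [hN.1 z v (fun hc => hne (hc j hj)), mul_zero])
    rw [key x y hxy, key x' y' hx'y']
    apply Finset.sum_nbij' (i := fun z => (fun j => if j ∈ S ∪ T then z j else x' j : Cfg n))
      (j := fun z => (fun j => if j ∈ S ∪ T then z j else x j : Cfg n))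
    · intro z hz
      simp only [Finset.mem_filter, Finset.mem_univ, true_and] at hz ⊢
      obtain ⟨h1, h2⟩ := hz
      constructor
      · intro j hj
        by_cases hjT : j ∈ S ∪ T
        · simp only [hjT, if_pos]
          rcases Finset.mem_union.mp hjT with hs | ht
          · exact absurd hs hj
          · rw [← hxx' j hjT, h1 j hj]
        · simp [hjT]
      · intro j hj
        by_cases hjT : j ∈ S ∪ T
        · simp only [hjT, if_pos]
          rcases Finset.mem_union.mp hjT with hs | ht
          · rw [h2 j hj, hyy' j hjT]
          · exact absurd ht hj
        · simp only [hjT, if_neg, if_false]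
          exact hx'y' j hjT
    · intro z hz
      simp only [Finset.mem_filter, Finset.mem_univ, true_and] at hz ⊢
      obtain ⟨h1, h2⟩ := hz
      constructor
      · intro j hj
        by_cases hjT : j ∈ S ∪ T
        · simp only [hjT, if_pos]
          rcases Finset.mem_union.mp hjT with hs | ht
          · exact absurd hs hj
          · rw [hxx' j hjT, h1 j hj]
        · simp [hjT]
      · intro j hj
        by_cases hjT : j ∈ S ∪ T
        · simp only [hjT, if_pos]
          rcases Finset.mem_union.mp hjT with hs | ht
          · rw [h2 j hj, ← hyy' j hjT]
          · exact absurd ht hj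
        · simp only [hjT, if_neg, if_false]
          exact hxy j hjT
    · intro z hz
      simp only [Finset.mem_filter, Finset.mem_univ, true_and] at hz
      funext j
      by_cases hjT : j ∈ S ∪ T
      · simp [hjT]
      · simp only [hjT, if_neg, if_false]
        exact hz.1 j (fun hc => hjT (Finset.mem_union_left _ hc))
    · intro z hz
      simp only [Finset.mem_filter, Finset.mem_univ, true_and] at hz
      funext j
      by_cases hjT : j ∈ S ∪ T
      · simp [hjT]
      · simp only [hjT, if_neg, if_false]
        exact hz.1 j (fun hc => hjT (Finset.mem_union_left _ hc))
    · intro z hz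
      simp only [Finset.mem_filter, Finset.mem_univ, true_and] at hz
      obtain ⟨h1, h2⟩ := hz
      congr 1
      · apply hM.2
        · intro j hj; exact hxx' j (Finset.mem_union_left _ hj)
        · intro j hj; simp [Finset.mem_union_left _ hj]
        · exact h1
        · intro j hj
          by_cases hjT : j ∈ S ∪ T
          · simp only [hjT, if_pos]
            rcases Finset.mem_union.mp hjT with hs | ht
            · exact absurd hs hj
            · rw [← hxx' j hjT, h1 j hj]
          · simp [hjT]
      · apply hN.2
        · intro j hj; simp [Finset.mem_union_right _ hj]
        · intro j hj; exact hyy' j (Finset.mem_union_right _ hj)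
        · exact h2
        · intro j hj
          by_cases hjT : j ∈ S ∪ T
          · simp only [hjT, if_pos]
            rcases Finset.mem_union.mp hjT with hs | ht
            · rw [h2 j hj, hyy' j hjT]
            · exact absurd ht hj
          · simp only [hjT, if_neg, if_false]
            exact hx'y' j hjT

/-- key vanishing: trace of twoSite * M vanishes when M is supported away from {a, nxt a} -/
lemma trace_twoSite_mul_eq_zero {n : ℕ} (hn : 3 ≤ n) (a : Fin n)
    (h : Matrix (Fin 2 × Fin 2) (Fin 2 × Fin 2) ℂ) (htr : h.trace = 0)
    {S : Finset (Fin n)} {M : Matrix (Cfg n) (Cfg n) ℂ} (hM : SupportedOn S M)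
    (haS : a ∉ S) (hnaS : nxt a ∉ S) :
    (twoSite n a h * M).trace = 0 := by
  have hna : nxt a ≠ a := nxt_ne_self hn a
  have hdiag : ∀ x : Cfg n, (twoSite n a h * M) x x =
      h (x a, x (nxt a)) (x a, x (nxt a)) * M x x := by
    intro x
    rw [Matrix.mul_apply]
    rw [Finset.sum_eq_single_of_mem x (Finset.mem_univ x) ?_]
    · congr 1
      rw [twoSite, if_pos (fun j _ _ => rfl)]
    · intro y _ hyx
      by_cases h1 : ∀ j : Fin n, j ≠ a → j ≠ nxt a → x j = y j
      · by_cases h2 : ∀ j ∉ S, y j = x j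
        · exfalso
          apply hyx
          funext j
          by_cases hja : j = a
          · subst hja; exact (h2 j haS).trans rfl
          · by_cases hjna : j = nxt a
            · subst hjna; exact h2 _ hnaS
            · exact (h1 j hja hjna).symm
        · rw [hM.1 y x h2, mul_zero]
      · rw [twoSite, if_neg h1, zero_mul]
  rw [Matrix.trace]
  simp only [Matrix.diag]
  calc ∑ x : Cfg n, (twoSite n a h * M) x x
      = ∑ x : Cfg n, h (x a, x (nxt a)) (x a, x (nxt a)) * M x x := by
        exact Finset.sum_congr rfl fun x _ => hdiag x
    _ = ∑ pq : Fin 2 × Fin 2, ∑ x ∈ Finset.univ.filter (fun x : Cfg n => (x a, x (nxt a)) = pq),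
          h (x a, x (nxt a)) (x a, x (nxt a)) * M x x := by
        rw [Finset.sum_fiberwise]
    _ = ∑ pq : Fin 2 × Fin 2, h pq pq * ∑ x ∈ Finset.univ.filter
          (fun x : Cfg n => (x a, x (nxt a)) = pq), M x x := by
        refine Finset.sum_congr rfl fun pq _ => ?_
        rw [Finset.mul_sum]
        refine Finset.sum_congr rfl fun x hx => ?_
        rw [(Finset.mem_filter.mp hx).2]
    _ = ∑ pq : Fin 2 × Fin 2, h pq pq * ∑ x ∈ Finset.univ.filter
          (fun x : Cfg n => (x a, x (nxt a)) = ((0 : Fin 2), (0 : Fin 2))), M x x := by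
        refine Finset.sum_congr rfl fun pq _ => ?_
        congr 1
        have hupd_a : ∀ (p q : Fin 2) (x : Cfg n),
            (Function.update (Function.update x a p) (nxt a) q) a = p := by
          intro p q x
          rw [Function.update_of_ne (Ne.symm hna), Function.update_self]
        have hupd_na : ∀ (p q : Fin 2) (x : Cfg n),
            (Function.update (Function.update x a p) (nxt a) q) (nxt a) = q := by
          intro p q x; rw [Function.update_self]
        have hupd_other : ∀ (p q : Fin 2) (x : Cfg n) (j : Fin n), j ≠ a → j ≠ nxt a →
            (Function.update (Function.update x a p) (nxt a) q) j = x j := by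
          intro p q x j hja hjna
          rw [Function.update_of_ne hjna, Function.update_of_ne hja]
        have hMinv : ∀ (p q : Fin 2) (x : Cfg n),
            M x x = M (Function.update (Function.update x a p) (nxt a) q)
              (Function.update (Function.update x a p) (nxt a) q) := by
          intro p q x
          apply hM.2
          · intro j hj
            exact (hupd_other p q x j (fun e => haS (e ▸ hj)) (fun e => hnaS (e ▸ hj))).symm
          · intro j hj
            exact (hupd_other p q x j (fun e => haS (e ▸ hj)) (fun e => hnaS (e ▸ hj))).symm
          · intro j _; rfl
          · intro j _; rfl
        apply Finset.sum_nbij'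
          (i := fun x => Function.update (Function.update x a 0) (nxt a) 0)
          (j := fun x => Function.update (Function.update x a pq.1) (nxt a) pq.2)
        · intro x _
          simp only [Finset.mem_filter, Finset.mem_univ, true_and]
          rw [hupd_a, hupd_na]
        · intro x _
          simp only [Finset.mem_filter, Finset.mem_univ, true_and]
          rw [hupd_a, hupd_na]
        · intro x hx
          have hx' := (Finset.mem_filter.mp hx).2
          obtain ⟨hxa, hxna⟩ := Prod.mk.inj hx'
          funext j
          by_cases hja : j = a
          · subst hja; rw [hupd_a, hxa]
          · by_cases hjna : j = nxt a
            · subst hjna; rw [hupd_na, hxna]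
            · rw [hupd_other _ _ _ j hja hjna, hupd_other _ _ _ j hja hjna]
        · intro x hx
          have hx' := (Finset.mem_filter.mp hx).2
          obtain ⟨hxa, hxna⟩ := Prod.mk.inj hx'
          funext j
          by_cases hja : j = a
          · subst hja; rw [hupd_a, hxa]
          · by_cases hjna : j = nxt a
            · subst hjna; rw [hupd_na, hxna]
            · rw [hupd_other _ _ _ j hja hjna, hupd_other _ _ _ j hja hjna]
        · intro x _
          exact hMinv 0 0 x
    _ = (∑ pq : Fin 2 × Fin 2, h pq pq) * ∑ x ∈ Finset.univ.filter
          (fun x : Cfg n => (x a, x (nxt a)) = ((0 : Fin 2), (0 : Fin 2))), M x x := by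
        rw [Finset.sum_mul]
    _ = 0 := by
        have : (∑ pq : Fin 2 × Fin 2, h pq pq) = h.trace := rfl
        rw [this, htr, zero_mul]

lemma twoSite_entry_le {n : ℕ} (i : Fin n) (h : Matrix (Fin 2 × Fin 2) (Fin 2 × Fin 2) ℂ)
    (hnorm : opNorm h ≤ 1) (x y : Cfg n) : ‖twoSite n i h x y‖ ≤ 1 := by
  rw [twoSite]
  split
  · exact le_trans (entry_le_opNorm h _ _) hnorm
  · simp

lemma card_agree_le {n : ℕ} (i : Fin n) (z : Cfg n) :
    (Finset.univ.filter (fun w : Cfg n => ∀ j : Fin n, j ≠ i → j ≠ nxt i → z j = w j)).card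
      ≤ 4 := by
  have : ((Finset.univ : Finset (Fin 2 × Fin 2))).card = 4 := by simp
  rw [← this]
  apply Finset.card_le_card_of_injOn (fun w => (w i, w (nxt i))) (fun _ _ => Finset.mem_univ _)
  intro w hw w' hw' hww'
  simp only [Finset.mem_coe, Finset.mem_filter, Finset.mem_univ, true_and] at hw hw'
  obtain ⟨h1, h2⟩ := Prod.mk.inj hww'
  funext j
  by_cases hji : j = i
  · subst hji; exact h1
  · by_cases hjni : j = nxt i
    · subst hjni; exact h2
    · rw [← hw j hji hjni, ← hw' j hji hjni]

lemma step_bound {n : ℕ} (i : Fin n) (h : Matrix (Fin 2 × Fin 2) (Fin 2 × Fin 2) ℂ)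
    (hnorm : opNorm h ≤ 1) (M : Matrix (Cfg n) (Cfg n) ℂ) (u : Cfg n) (c : ℝ) (hc : 0 ≤ c)
    (hM : ∀ w, ‖M w u‖ ≤ c) (z : Cfg n) :
    ‖(twoSite n i h * M) z u‖ ≤ 4 * c := by
  rw [Matrix.mul_apply]
  refine le_trans (norm_sum_le _ _) ?_
  calc ∑ w : Cfg n, ‖twoSite n i h z w * M w u‖
      = ∑ w ∈ Finset.univ.filter (fun w : Cfg n => ∀ j : Fin n, j ≠ i → j ≠ nxt i → z j = w j),
          ‖twoSite n i h z w * M w u‖ := by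
        symm
        apply Finset.sum_filter_of_ne
        intro w _ hw
        by_contra hcond
        exact hw (by rw [twoSite, if_neg hcond, zero_mul, norm_zero])
    _ ≤ ∑ w ∈ Finset.univ.filter (fun w : Cfg n => ∀ j : Fin n, j ≠ i → j ≠ nxt i → z j = w j),
          c := by
        apply Finset.sum_le_sum
        intro w _
        rw [norm_mul]
        calc ‖twoSite n i h z w‖ * ‖M w u‖
            ≤ 1 * c := by
              apply mul_le_mul (twoSite_entry_le i h hnorm z w) (hM w)
                (norm_nonneg _) zero_le_one
          _ = c := one_mul c
    _ = (Finset.univ.filter (fun w : Cfg n => ∀ j : Fin n, j ≠ i → j ≠ nxt i → z j = w j)).card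
          * c := by rw [Finset.sum_const, nsmul_eq_mul]
    _ ≤ 4 * c := by
        apply mul_le_mul_of_nonneg_right _ hc
        exact_mod_cast card_agree_le i z

lemma trace_four_le {n : ℕ} (a b c d : Fin n) (h : Matrix (Fin 2 × Fin 2) (Fin 2 × Fin 2) ℂ)
    (hnorm : opNorm h ≤ 1) :
    ‖(twoSite n a h * twoSite n b h * twoSite n c h * twoSite n d h).trace‖ ≤ 64 * 2 ^ n := by
  have hcard : (Fintype.card (Cfg n) : ℝ) = 2 ^ n := by
    simp [Fintype.card_fun]
  rw [show twoSite n a h * twoSite n b h * twoSite n c h * twoSite n d h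
      = twoSite n a h * (twoSite n b h * (twoSite n c h * twoSite n d h)) by
    rw [mul_assoc, mul_assoc]]
  rw [Matrix.trace]
  refine le_trans (norm_sum_le _ _) ?_
  have hbase : ∀ u w, ‖(twoSite n c h * twoSite n d h) w u‖ ≤ 4 * 1 := by
    intro u w
    exact step_bound c h hnorm _ u 1 zero_le_one (fun w' => twoSite_entry_le d h hnorm w' u) w
  have h2 : ∀ u w, ‖(twoSite n b h * (twoSite n c h * twoSite n d h)) w u‖
      ≤ 4 * (4 * 1) := by
    intro u w
    exact step_bound b h hnorm _ u (4 * 1) (by norm_num) (hbase u) w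
  have h3 : ∀ x : Cfg n, ‖
      (twoSite n a h * (twoSite n b h * (twoSite n c h * twoSite n d h))) x x‖
      ≤ 4 * (4 * (4 * 1)) := by
    intro x
    exact step_bound a h hnorm _ x (4 * (4 * 1)) (by norm_num) (h2 x) x
  calc ∑ x : Cfg n, ‖
        (twoSite n a h * (twoSite n b h * (twoSite n c h * twoSite n d h))).diag x‖
      ≤ ∑ _x : Cfg n, (4 * (4 * (4 * 1)) : ℝ) := Finset.sum_le_sum (fun x _ => h3 x)
    _ = (Fintype.card (Cfg n) : ℝ) * 64 := by rw [Finset.sum_const, nsmul_eq_mul]; norm_num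
    _ = 64 * 2 ^ n := by rw [hcard]; ring

def close {n : ℕ} (a b : Fin n) : Prop := a = b ∨ nxt a = b ∨ nxt b = a

def close2 {n : ℕ} (a b : Fin n) : Prop := ∃ e, close a e ∧ close e b

def pre {n : ℕ} (a : Fin n) : Fin n :=
  ⟨(a.1 + (n - 1)) % n, Nat.mod_lt _ (Nat.lt_of_le_of_lt (Nat.zero_le _) a.2)⟩

lemma nxt_pre {n : ℕ} (a : Fin n) : nxt (pre a) = a := by
  have ha := a.2
  apply Fin.ext
  simp only [nxt, pre]
  rw [Nat.mod_add_mod]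
  have : a.1 + (n - 1) + 1 = a.1 + n := by omega
  rw [this, Nat.add_mod_right, Nat.mod_eq_of_lt ha]

lemma close_refl {n : ℕ} (a : Fin n) : close a a := Or.inl rfl

lemma close_symm {n : ℕ} {a b : Fin n} (h : close a b) : close b a := by
  rcases h with h | h | h
  · exact Or.inl h.symm
  · exact Or.inr (Or.inr h)
  · exact Or.inr (Or.inl h)

def nbr {n : ℕ} (a : Fin n) : Finset (Fin n) := {a, nxt a, pre a}

lemma close_mem_nbr {n : ℕ} {a b : Fin n} (h : close a b) : b ∈ nbr a := by
  rcases h with h | h | h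
  · simp [nbr, h.symm]
  · simp [nbr, h.symm]
  · have : b = pre a := nxt_injective (h.trans (nxt_pre a).symm)
    simp [nbr, this]

lemma card_nbr_le {n : ℕ} (a : Fin n) : (nbr a).card ≤ 3 := by
  show ({a, nxt a, pre a} : Finset (Fin n)).card ≤ 3
  have h1 := Finset.card_insert_le a ({nxt a, pre a} : Finset (Fin n))
  have h2 := Finset.card_insert_le (nxt a) ({pre a} : Finset (Fin n))
  have h3 : ({pre a} : Finset (Fin n)).card = 1 := Finset.card_singleton _
  omega

lemma sum_ind_close {n : ℕ} (a : Fin n) :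
    ∑ b : Fin n, (if close a b then (1:ℝ) else 0) ≤ 3 := by
  rw [Finset.sum_boole]
  have hsub : Finset.univ.filter (fun b => close a b) ⊆ nbr a := by
    intro b hb
    exact close_mem_nbr (Finset.mem_filter.mp hb).2
  have := le_trans (Finset.card_le_card hsub) (card_nbr_le a)
  exact_mod_cast this

lemma sum_ind_close2 {n : ℕ} (a : Fin n) :
    ∑ b : Fin n, (if close2 a b then (1:ℝ) else 0) ≤ 9 := by
  rw [Finset.sum_boole]
  have hsub : Finset.univ.filter (fun b => close2 a b) ⊆ (nbr a).biUnion nbr := by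
    intro b hb
    obtain ⟨e, he1, he2⟩ := (Finset.mem_filter.mp hb).2
    exact Finset.mem_biUnion.mpr ⟨e, close_mem_nbr he1, close_mem_nbr he2⟩
  have h1 := Finset.card_le_card hsub
  have h2 := Finset.card_biUnion_le (s := nbr a) (t := nbr)
  have h3 : ∑ e ∈ nbr a, (nbr e).card ≤ ∑ _e ∈ nbr a, 3 :=
    Finset.sum_le_sum fun e _ => card_nbr_le e
  have h4 : ∑ _e ∈ nbr a, 3 = (nbr a).card * 3 := by
    rw [Finset.sum_const, smul_eq_mul]
  have h5 := card_nbr_le a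
  have : (Finset.univ.filter (fun b => close2 a b)).card ≤ 9 := by omega
  exact_mod_cast this

section quad
variable {n : ℕ}

lemma hPQ (P Q : Prop) : (if P ∧ Q then (1:ℝ) else 0) = (if P then 1 else 0) * (if Q then 1 else 0) := by
  by_cases hP : P <;> by_cases hQ : Q <;> simp [hP, hQ]

lemma ind_nonneg (P : Prop) : (0:ℝ) ≤ (if P then (1:ℝ) else 0) := by split <;> norm_num

lemma sum2_ind_close : ∑ a : Fin n, ∑ b : Fin n, (if close a b then (1:ℝ) else 0) ≤ 3 * n := by
  calc ∑ a : Fin n, ∑ b : Fin n, (if close a b then (1:ℝ) else 0)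
      ≤ ∑ _a : Fin n, (3:ℝ) := Finset.sum_le_sum (fun a _ => sum_ind_close a)
    _ = 3 * n := by rw [Finset.sum_const, nsmul_eq_mul, Finset.card_univ, Fintype.card_fin]; ring

lemma quad1 : ∑ a : Fin n, ∑ b : Fin n, ∑ c : Fin n, ∑ d : Fin n,
    (if close a b ∧ close c d then (1:ℝ) else 0) ≤ 9 * n^2 := by
  have step : ∀ a b : Fin n, ∑ c : Fin n, ∑ d : Fin n,
      (if close a b ∧ close c d then (1:ℝ) else 0)
      = (if close a b then (1:ℝ) else 0) * ∑ c : Fin n, ∑ d : Fin n,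
        (if close c d then (1:ℝ) else 0) := by
    intro a b
    rw [Finset.mul_sum]
    refine Finset.sum_congr rfl fun c _ => ?_
    rw [Finset.mul_sum]
    exact Finset.sum_congr rfl fun d _ => hPQ _ _
  calc ∑ a : Fin n, ∑ b : Fin n, ∑ c : Fin n, ∑ d : Fin n,
        (if close a b ∧ close c d then (1:ℝ) else 0)
      = ∑ a : Fin n, ∑ b : Fin n, (if close a b then (1:ℝ) else 0) *
          ∑ c : Fin n, ∑ d : Fin n, (if close c d then (1:ℝ) else 0) := by
        exact Finset.sum_congr rfl fun a _ => Finset.sum_congr rfl fun b _ => step a b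
    _ ≤ ∑ a : Fin n, ∑ b : Fin n, (if close a b then (1:ℝ) else 0) * (3 * n) := by
        refine Finset.sum_le_sum fun a _ => Finset.sum_le_sum fun b _ => ?_
        exact mul_le_mul_of_nonneg_left sum2_ind_close (ind_nonneg _)
    _ = (∑ a : Fin n, ∑ b : Fin n, (if close a b then (1:ℝ) else 0)) * (3 * n) := by
        rw [Finset.sum_mul]
        exact Finset.sum_congr rfl fun a _ => by rw [Finset.sum_mul]
    _ ≤ (3 * n) * (3 * n) := by
        apply mul_le_mul_of_nonneg_right sum2_ind_close (by positivity)
    _ = 9 * n^2 := by ring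

lemma quad2 : ∑ a : Fin n, ∑ b : Fin n, ∑ c : Fin n, ∑ d : Fin n,
    (if close a c ∧ close b d then (1:ℝ) else 0) ≤ 9 * n^2 := by
  have step : ∀ a b : Fin n, ∑ c : Fin n, ∑ d : Fin n,
      (if close a c ∧ close b d then (1:ℝ) else 0)
      = (∑ c : Fin n, (if close a c then (1:ℝ) else 0)) *
        (∑ d : Fin n, (if close b d then (1:ℝ) else 0)) := by
    intro a b
    rw [Finset.sum_mul]
    refine Finset.sum_congr rfl fun c _ => ?_
    rw [Finset.mul_sum]
    exact Finset.sum_congr rfl fun d _ => hPQ _ _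
  calc ∑ a : Fin n, ∑ b : Fin n, ∑ c : Fin n, ∑ d : Fin n,
        (if close a c ∧ close b d then (1:ℝ) else 0)
      = ∑ a : Fin n, ∑ b : Fin n, (∑ c : Fin n, (if close a c then (1:ℝ) else 0)) *
        (∑ d : Fin n, (if close b d then (1:ℝ) else 0)) :=
        Finset.sum_congr rfl fun a _ => Finset.sum_congr rfl fun b _ => step a b
    _ ≤ ∑ _a : Fin n, ∑ _b : Fin n, (3:ℝ) * 3 := by
        refine Finset.sum_le_sum fun a _ => Finset.sum_le_sum fun b _ => ?_
        exact mul_le_mul (sum_ind_close a) (sum_ind_close b)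
          (Finset.sum_nonneg fun d _ => ind_nonneg _) (by norm_num)
    _ = 9 * n^2 := by
        simp [Finset.sum_const, Finset.card_univ]
        ring
 
lemma quad3 : ∑ a : Fin n, ∑ b : Fin n, ∑ c : Fin n, ∑ d : Fin n,
    (if close a d ∧ close b c then (1:ℝ) else 0) ≤ 9 * n^2 := by
  have step : ∀ a b : Fin n, ∑ c : Fin n, ∑ d : Fin n,
      (if close a d ∧ close b c then (1:ℝ) else 0)
      = (∑ c : Fin n, (if close b c then (1:ℝ) else 0)) *
        (∑ d : Fin n, (if close a d then (1:ℝ) else 0)) := by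
    intro a b
    rw [Finset.sum_mul]
    refine Finset.sum_congr rfl fun c _ => ?_
    rw [Finset.mul_sum]
    refine Finset.sum_congr rfl fun d _ => ?_
    rw [hPQ]
    ring
  calc ∑ a : Fin n, ∑ b : Fin n, ∑ c : Fin n, ∑ d : Fin n,
        (if close a d ∧ close b c then (1:ℝ) else 0)
      = ∑ a : Fin n, ∑ b : Fin n, (∑ c : Fin n, (if close b c then (1:ℝ) else 0)) *
        (∑ d : Fin n, (if close a d then (1:ℝ) else 0)) :=
        Finset.sum_congr rfl fun a _ => Finset.sum_congr rfl fun b _ => step a b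
    _ ≤ ∑ _a : Fin n, ∑ _b : Fin n, (3:ℝ) * 3 := by
        refine Finset.sum_le_sum fun a _ => Finset.sum_le_sum fun b _ => ?_
        exact mul_le_mul (sum_ind_close b) (sum_ind_close a)
          (Finset.sum_nonneg fun d _ => ind_nonneg _) (by norm_num)
    _ = 9 * n^2 := by
        simp [Finset.sum_const, Finset.card_univ]
        ring

lemma quad4 : ∑ a : Fin n, ∑ b : Fin n, ∑ c : Fin n, ∑ d : Fin n,
    (if close2 a b ∧ close2 a c ∧ close2 a d then (1:ℝ) else 0) ≤ 729 * n := by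
  have step : ∀ a : Fin n, ∑ b : Fin n, ∑ c : Fin n, ∑ d : Fin n,
      (if close2 a b ∧ close2 a c ∧ close2 a d then (1:ℝ) else 0)
      = (∑ b : Fin n, (if close2 a b then (1:ℝ) else 0)) *
        ((∑ c : Fin n, (if close2 a c then (1:ℝ) else 0)) *
         (∑ d : Fin n, (if close2 a d then (1:ℝ) else 0))) := by
    intro a
    rw [Finset.sum_mul]
    refine Finset.sum_congr rfl fun b _ => ?_
    rw [Finset.sum_mul, Finset.mul_sum]
    refine Finset.sum_congr rfl fun c _ => ?_
    rw [Finset.mul_sum, Finset.mul_sum]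
    refine Finset.sum_congr rfl fun d _ => ?_
    by_cases h1 : close2 a b <;> by_cases h2 : close2 a c <;> by_cases h3 : close2 a d <;>
      simp [h1, h2, h3]
  calc ∑ a : Fin n, ∑ b : Fin n, ∑ c : Fin n, ∑ d : Fin n,
        (if close2 a b ∧ close2 a c ∧ close2 a d then (1:ℝ) else 0)
      = ∑ a : Fin n, (∑ b : Fin n, (if close2 a b then (1:ℝ) else 0)) *
        ((∑ c : Fin n, (if close2 a c then (1:ℝ) else 0)) *
         (∑ d : Fin n, (if close2 a d then (1:ℝ) else 0))) :=
        Finset.sum_congr rfl fun a _ => step a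
    _ ≤ ∑ _a : Fin n, (9:ℝ) * (9 * 9) := by
        refine Finset.sum_le_sum fun a _ => ?_
        have hnn : ∀ x : Fin n, (0:ℝ) ≤ ∑ d : Fin n, (if close2 a d then (1:ℝ) else 0) :=
          fun _ => Finset.sum_nonneg fun d _ => ind_nonneg _
        apply mul_le_mul (sum_ind_close2 a) _ ?_ (by norm_num)
        · exact mul_le_mul (sum_ind_close2 a) (sum_ind_close2 a)
            (Finset.sum_nonneg fun d _ => ind_nonneg _) (by norm_num)
        · exact mul_nonneg (Finset.sum_nonneg fun c _ => ind_nonneg _)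
            (Finset.sum_nonneg fun d _ => ind_nonneg _)
    _ = 729 * n := by
        rw [Finset.sum_const, nsmul_eq_mul, Finset.card_univ, Fintype.card_fin]
        ring

end quad

section main
variable {n : ℕ} (h : Matrix (Fin 2 × Fin 2) (Fin 2 × Fin 2) ℂ)

/-- membership facts for non-close indices -/
lemma not_mem_of_not_close {a b : Fin n} (hab : ¬ close a b) :
    a ∉ ({b, nxt b} : Finset (Fin n)) ∧ nxt a ∉ ({b, nxt b} : Finset (Fin n)) := by
  constructor
  · intro hmem
    rcases Finset.mem_insert.mp hmem with e | e
    · exact hab (Or.inl e)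
    · exact hab (Or.inr (Or.inr (Finset.mem_singleton.mp e).symm))
  · intro hmem
    rcases Finset.mem_insert.mp hmem with e | e
    · exact hab (Or.inr (Or.inl e))
    · exact hab (Or.inl (nxt_injective (Finset.mem_singleton.mp e)))

lemma rot4 {n : ℕ} (W X Y Z : Matrix (Cfg n) (Cfg n) ℂ) :
    (W * X * Y * Z).trace = (X * Y * Z * W).trace := by
  rw [mul_assoc W X Y, mul_assoc W (X * Y) Z, Matrix.trace_mul_comm]

lemma iso_trace_zero (hn : 3 ≤ n) (htr : h.trace = 0) (a b c d : Fin n)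
    (hab : ¬ close a b) (hac : ¬ close a c) (had : ¬ close a d) :
    (twoSite n a h * (twoSite n b h * (twoSite n c h * twoSite n d h))).trace = 0 := by
  have hsupp : SupportedOn (({b, nxt b} : Finset (Fin n)) ∪
      (({c, nxt c} : Finset (Fin n)) ∪ ({d, nxt d} : Finset (Fin n))))
      (twoSite n b h * (twoSite n c h * twoSite n d h)) :=
    supportedOn_mul (twoSite_supportedOn b h)
      (supportedOn_mul (twoSite_supportedOn c h) (twoSite_supportedOn d h))
  apply trace_twoSite_mul_eq_zero hn a h htr hsupp
  · intro hmem
    rcases Finset.mem_union.mp hmem with e | e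
    · exact (not_mem_of_not_close hab).1 e
    · rcases Finset.mem_union.mp e with e | e
      · exact (not_mem_of_not_close hac).1 e
      · exact (not_mem_of_not_close had).1 e
  · intro hmem
    rcases Finset.mem_union.mp hmem with e | e
    · exact (not_mem_of_not_close hab).2 e
    · rcases Finset.mem_union.mp e with e | e
      · exact (not_mem_of_not_close hac).2 e
      · exact (not_mem_of_not_close had).2 e

lemma tuple_bound (hn : 3 ≤ n) (htr : h.trace = 0) (hnorm : opNorm h ≤ 1) (a b c d : Fin n) :
    ‖(twoSite n a h * twoSite n b h * twoSite n c h * twoSite n d h).trace‖ ≤ 64 * 2 ^ n * ((if close a b ∧ close c d then (1:ℝ) else 0)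
        + (if close a c ∧ close b d then (1:ℝ) else 0)
        + (if close a d ∧ close b c then (1:ℝ) else 0)
        + (if close2 a b ∧ close2 a c ∧ close2 a d then (1:ℝ) else 0)) := by
  have hassoc : twoSite n a h * twoSite n b h * twoSite n c h * twoSite n d h
      = twoSite n a h * (twoSite n b h * (twoSite n c h * twoSite n d h)) := by
    rw [mul_assoc, mul_assoc]
  set i1 := (if close a b ∧ close c d then (1:ℝ) else 0) with hi1
  set i2 := (if close a c ∧ close b d then (1:ℝ) else 0) with hi2
  set i3 := (if close a d ∧ close b c then (1:ℝ) else 0) with hi3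
  set i4 := (if close2 a b ∧ close2 a c ∧ close2 a d then (1:ℝ) else 0) with hi4
  have hnn1 : 0 ≤ i1 := by rw [hi1]; split <;> norm_num
  have hnn2 : 0 ≤ i2 := by rw [hi2]; split <;> norm_num
  have hnn3 : 0 ≤ i3 := by rw [hi3]; split <;> norm_num
  have hnn4 : 0 ≤ i4 := by rw [hi4]; split <;> norm_num
  have hpow : (0:ℝ) < 2 ^ n := by positivity
  by_cases Ha : close a b ∨ close a c ∨ close a d
  · by_cases Hb : close b a ∨ close b c ∨ close b d
    · by_cases Hc : close c a ∨ close c b ∨ close c d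
      · by_cases Hd : close d a ∨ close d b ∨ close d c
        · -- all have neighbors: some indicator is 1
          have hone : (1:ℝ) ≤ i1 + i2 + i3 + i4 := by
            have key : (i1 = 1) ∨ (i2 = 1) ∨ (i3 = 1) ∨ (i4 = 1) := by
              rcases Ha with hab | hac | had
              · by_cases hcd : close c d
                · exact Or.inl (by rw [hi1, if_pos ⟨hab, hcd⟩])
                · refine Or.inr (Or.inr (Or.inr (by rw [hi4, if_pos ⟨⟨b, hab, close_refl b⟩, ?_, ?_⟩])))
                  · rcases Hc with e | e | e
                    · exact ⟨a, close_refl a, close_symm e⟩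
                    · exact ⟨b, hab, close_symm e⟩
                    · exact absurd e hcd
                  · rcases Hd with e | e | e
                    · exact ⟨a, close_refl a, close_symm e⟩
                    · exact ⟨b, hab, close_symm e⟩
                    · exact absurd (close_symm e) hcd
              · by_cases hbd : close b d
                · exact Or.inr (Or.inl (by rw [hi2, if_pos ⟨hac, hbd⟩]))
                · refine Or.inr (Or.inr (Or.inr (by rw [hi4, if_pos ⟨?_, ⟨c, hac, close_refl c⟩, ?_⟩])))
                  · rcases Hb with e | e | e
                    · exact ⟨a, close_refl a, close_symm e⟩
                    · exact ⟨c, hac, close_symm e⟩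
                    · exact absurd e hbd
                  · rcases Hd with e | e | e
                    · exact ⟨a, close_refl a, close_symm e⟩
                    · exact absurd (close_symm e) hbd
                    · exact ⟨c, hac, close_symm e⟩
              · by_cases hbc : close b c
                · exact Or.inr (Or.inr (Or.inl (by rw [hi3, if_pos ⟨had, hbc⟩])))
                · refine Or.inr (Or.inr (Or.inr (by rw [hi4, if_pos ⟨?_, ?_, ⟨d, had, close_refl d⟩⟩])))
                  · rcases Hb with e | e | e
                    · exact ⟨a, close_refl a, close_symm e⟩
                    · exact absurd e hbc
                    · exact ⟨d, had, close_symm e⟩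
                  · rcases Hc with e | e | e
                    · exact ⟨a, close_refl a, close_symm e⟩
                    · exact absurd (close_symm e) hbc
                    · exact ⟨d, had, close_symm e⟩
            rcases key with e | e | e | e <;> rw [e] <;> linarith
          calc ‖(twoSite n a h * twoSite n b h * twoSite n c h * twoSite n d h).trace‖ ≤ 64 * 2 ^ n := trace_four_le a b c d h hnorm
            _ = 64 * 2 ^ n * 1 := by ring
            _ ≤ 64 * 2 ^ n * (i1 + i2 + i3 + i4) := by
                apply mul_le_mul_of_nonneg_left hone (by positivity)
        · -- d isolated
          push_neg at Hd
          have : (twoSite n a h * twoSite n b h * twoSite n c h * twoSite n d h).trace = 0 := by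
            rw [rot4, rot4, rot4, mul_assoc, mul_assoc]
            exact iso_trace_zero h hn htr d a b c Hd.1 Hd.2.1 Hd.2.2
          rw [this, norm_zero]
          positivity
      · -- c isolated
        push_neg at Hc
        have : (twoSite n a h * twoSite n b h * twoSite n c h * twoSite n d h).trace = 0 := by
          rw [rot4, rot4, mul_assoc, mul_assoc]
          exact iso_trace_zero h hn htr c d a b Hc.2.2 Hc.1 Hc.2.1
        rw [this, norm_zero]
        positivity
    · -- b isolated
      push_neg at Hb
      have : (twoSite n a h * twoSite n b h * twoSite n c h * twoSite n d h).trace = 0 := by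
        rw [rot4, mul_assoc, mul_assoc]
        exact iso_trace_zero h hn htr b c d a Hb.2.1 Hb.2.2 Hb.1
      rw [this, norm_zero]
      positivity
  · -- a isolated
    push_neg at Ha
    have : (twoSite n a h * twoSite n b h * twoSite n c h * twoSite n d h).trace = 0 := by
      rw [hassoc]
      exact iso_trace_zero h hn htr a b c d Ha.1 Ha.2.1 Ha.2.2
    rw [this, norm_zero]
    positivity

end main

lemma sum4_rev {M : Type*} [AddCommMonoid M] {n : ℕ} (f : Fin n → Fin n → Fin n → Fin n → M) :
    (∑ x : Fin n, ∑ y : Fin n, ∑ z : Fin n, ∑ w : Fin n, f w z y x)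
      = ∑ a : Fin n, ∑ b : Fin n, ∑ c : Fin n, ∑ d : Fin n, f a b c d := calc
  (∑ x : Fin n, ∑ y : Fin n, ∑ z : Fin n, ∑ w : Fin n, f w z y x)
      = ∑ x : Fin n, ∑ y : Fin n, ∑ w : Fin n, ∑ z : Fin n, f w z y x :=
        by exact Finset.sum_congr rfl fun x _ => Finset.sum_congr rfl fun y _ => Finset.sum_comm
    _ = ∑ x : Fin n, ∑ w : Fin n, ∑ y : Fin n, ∑ z : Fin n, f w z y x :=
        by exact Finset.sum_congr rfl fun x _ => Finset.sum_comm
    _ = ∑ w : Fin n, ∑ x : Fin n, ∑ y : Fin n, ∑ z : Fin n, f w z y x := by exact Finset.sum_comm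
    _ = ∑ w : Fin n, ∑ x : Fin n, ∑ z : Fin n, ∑ y : Fin n, f w z y x :=
        Finset.sum_congr rfl fun w _ => by exact Finset.sum_congr rfl fun x _ => Finset.sum_comm
    _ = ∑ w : Fin n, ∑ z : Fin n, ∑ x : Fin n, ∑ y : Fin n, f w z y x :=
        by exact Finset.sum_congr rfl fun w _ => Finset.sum_comm
    _ = ∑ w : Fin n, ∑ z : Fin n, ∑ y : Fin n, ∑ x : Fin n, f w z y x :=
        by exact Finset.sum_congr rfl fun w _ => Finset.sum_congr rfl fun z _ => Finset.sum_comm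

set_option maxHeartbeats 2000000 in
lemma sum_E4_bound {n : ℕ} (h : Matrix (Fin 2 × Fin 2) (Fin 2 × Fin 2) ℂ)
    (hn : 3 ≤ n) (htr : h.trace = 0) (hnorm : opNorm h ≤ 1)
    (U : Matrix (Cfg n) (Cfg n) ℂ) (E : Cfg n → ℝ)
    (hU : U ∈ Matrix.unitaryGroup (Cfg n) ℂ)
    (hdecomp : ham h n = U * Matrix.diagonal (fun j => (E j : ℂ)) * Uᴴ) :
    ∑ j : Cfg n, (E j)^4 ≤ 48384 * (n:ℝ)^2 * 2^n := by
  have hn1 : (1:ℝ) ≤ n := by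
    have : (3:ℝ) ≤ n := by exact_mod_cast hn
    linarith
  -- spectral identity
  have hUU : Uᴴ * U = 1 := by
    have := Matrix.mem_unitaryGroup_iff'.mp hU
    rwa [Matrix.star_eq_conjTranspose] at this
  set D := Matrix.diagonal (fun j => (E j : ℂ)) with hD
  have hmul : ∀ X Y : Matrix (Cfg n) (Cfg n) ℂ, (U * X * Uᴴ) * (U * Y * Uᴴ) = U * (X * Y) * Uᴴ := by
    intro X Y
    calc (U * X * Uᴴ) * (U * Y * Uᴴ) = U * (X * ((Uᴴ * U) * (Y * Uᴴ))) := by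
          simp only [Matrix.mul_assoc]
      _ = U * (X * Y) * Uᴴ := by
          rw [hUU, Matrix.one_mul, ← Matrix.mul_assoc, ← Matrix.mul_assoc, Matrix.mul_assoc U X Y]
  have hid : (ham h n * ham h n * ham h n * ham h n).trace = ((∑ j : Cfg n, (E j)^4 : ℝ) : ℂ) := by
    have h4 : ham h n * ham h n * ham h n * ham h n = U * (D * D * D * D) * Uᴴ := by
      rw [hdecomp, hmul, hmul, hmul]
    rw [h4]
    have : (U * (D * D * D * D) * Uᴴ).trace = (D * D * D * D).trace := by
      rw [Matrix.trace_mul_cycle, ← Matrix.mul_assoc, hUU, Matrix.one_mul]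
    rw [this, hD]
    simp only [Matrix.diagonal_mul_diagonal, Matrix.trace_diagonal]
    push_cast
    exact Finset.sum_congr rfl fun j _ => by ring
  -- expansion
  have hexp : (ham h n * ham h n * ham h n * ham h n).trace
      = ∑ a : Fin n, ∑ b : Fin n, ∑ c : Fin n, ∑ d : Fin n,
        (twoSite n a h * twoSite n b h * twoSite n c h * twoSite n d h).trace := by
    simp only [ham, Finset.sum_mul, Finset.mul_sum, Matrix.trace_sum]
    exact sum4_rev (fun a b c d =>
      (twoSite n a h * twoSite n b h * twoSite n c h * twoSite n d h).trace)
  -- put together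
  have hnonneg : (0:ℝ) ≤ ∑ j : Cfg n, (E j)^4 :=
    Finset.sum_nonneg fun j _ => by positivity
  have habs : ∑ j : Cfg n, (E j)^4
      = ‖(ham h n * ham h n * ham h n * ham h n).trace‖ := by
    rw [hid, Complex.norm_real, Real.norm_eq_abs, abs_of_nonneg hnonneg]
  rw [habs, hexp]
  have hK : (0:ℝ) ≤ 64 * 2^n := by positivity
  calc ‖∑ a : Fin n, ∑ b : Fin n, ∑ c : Fin n, ∑ d : Fin n,
        (twoSite n a h * twoSite n b h * twoSite n c h * twoSite n d h).trace‖
      ≤ ∑ a : Fin n, ∑ b : Fin n, ∑ c : Fin n, ∑ d : Fin n, ‖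
        (twoSite n a h * twoSite n b h * twoSite n c h * twoSite n d h).trace‖ := by
        refine le_trans (norm_sum_le _ _) (Finset.sum_le_sum fun a _ => ?_)
        refine le_trans (norm_sum_le _ _) (Finset.sum_le_sum fun b _ => ?_)
        refine le_trans (norm_sum_le _ _) (Finset.sum_le_sum fun c _ => ?_)
        exact norm_sum_le _ _
    _ ≤ ∑ a : Fin n, ∑ b : Fin n, ∑ c : Fin n, ∑ d : Fin n, 64 * 2 ^ n *
          ((if close a b ∧ close c d then (1:ℝ) else 0)
          + (if close a c ∧ close b d then (1:ℝ) else 0)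
          + (if close a d ∧ close b c then (1:ℝ) else 0)
          + (if close2 a b ∧ close2 a c ∧ close2 a d then (1:ℝ) else 0)) := by
        refine Finset.sum_le_sum fun a _ => Finset.sum_le_sum fun b _ =>
          Finset.sum_le_sum fun c _ => Finset.sum_le_sum fun d _ => ?_
        exact tuple_bound h hn htr hnorm a b c d
    _ = 64 * 2 ^ n *
        ((∑ a : Fin n, ∑ b : Fin n, ∑ c : Fin n, ∑ d : Fin n,
          (if close a b ∧ close c d then (1:ℝ) else 0))
        + (∑ a : Fin n, ∑ b : Fin n, ∑ c : Fin n, ∑ d : Fin n,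
          (if close a c ∧ close b d then (1:ℝ) else 0))
        + (∑ a : Fin n, ∑ b : Fin n, ∑ c : Fin n, ∑ d : Fin n,
          (if close a d ∧ close b c then (1:ℝ) else 0))
        + (∑ a : Fin n, ∑ b : Fin n, ∑ c : Fin n, ∑ d : Fin n,
          (if close2 a b ∧ close2 a c ∧ close2 a d then (1:ℝ) else 0))) := by
        simp only [← Finset.mul_sum, Finset.sum_add_distrib]
    _ ≤ 64 * 2 ^ n * ((9 * n^2) + (9 * n^2) + (9 * n^2) + 729 * n) := by
        apply mul_le_mul_of_nonneg_left _ hK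
        have q1 := quad1 (n := n); have q2 := quad2 (n := n)
        have q3 := quad3 (n := n); have q4 := quad4 (n := n)
        linarith
    _ ≤ 48384 * (n:ℝ)^2 * 2^n := by
        have hn2 : (n:ℝ) ≤ (n:ℝ)^2 := by nlinarith
        have h2n : (0:ℝ) < 2^n := by positivity
        nlinarith

lemma lip_bound {δ : ℝ} (hδ0 : 0 < δ) {f : ℝ → ℂ}
    (hf : ContDiffOn ℝ 3 f (Set.Icc (-δ) δ)) (hf0 : f 0 = 0) :
    ∃ K : ℝ, 0 ≤ K ∧ ∀ x ∈ Set.Icc (-δ) δ, ‖f x‖ ≤ K * |x| := by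
  set s := Set.Icc (-δ) δ with hs
  have hconv : Convex ℝ s := convex_Icc _ _
  have hcomp : IsCompact s := isCompact_Icc
  have h0s : (0:ℝ) ∈ s := by constructor <;> simp [le_of_lt hδ0]
  have hdiff : DifferentiableOn ℝ f s :=
    hf.differentiableOn (by norm_num)
  have hcd : ContinuousOn (fun x => ‖derivWithin f s x‖) s := by
    apply ContinuousOn.norm
    exact hf.continuousOn_derivWithin (uniqueDiffOn_Icc (by linarith)) (by norm_num)
  obtain ⟨x₀, hx₀, hmax'⟩ := hcomp.exists_isMaxOn ⟨0, h0s⟩ hcd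
  have hmax : ∀ y ∈ s, ‖derivWithin f s y‖ ≤ ‖derivWithin f s x₀‖ := fun y hy => hmax' hy
  refine ⟨‖derivWithin f s x₀‖, norm_nonneg _, fun x hx => ?_⟩
  have := hconv.norm_image_sub_le_of_norm_derivWithin_le hdiff
    (fun y hy => hmax y hy) h0s hx
  rw [hf0, sub_zero, sub_zero] at this
  exact this

lemma pow4_add_le (s t : ℝ) (hs : 0 ≤ s) (ht : 0 ≤ t) : (s + t)^4 ≤ 8 * s^4 + 8 * t^4 := by
  nlinarith [sq_nonneg (s - t), sq_nonneg (s + t), sq_nonneg (s*s - t*t), mul_nonneg hs ht,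
    sq_nonneg (s*t), mul_nonneg (mul_nonneg hs hs) (mul_nonneg ht ht)]

lemma rpow_neg_two (n : ℕ) (hn : 1 ≤ n) : (n:ℝ) ^ (-(2:ℝ)) = 1 / (n:ℝ)^2 := by
  rw [Real.rpow_neg (by positivity), one_div]
  congr 1
  rw [show ((2:ℝ)) = ((2:ℕ):ℝ) by norm_num, Real.rpow_natCast]

lemma abs_pow4 (E : ℝ) : |E|^4 = E^4 := by
  rw [← abs_pow]
  exact abs_of_nonneg (by positivity)

theorem stmt16 (h : Matrix (Fin 2 × Fin 2) (Fin 2 × Fin 2) ℂ)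
    (hherm : h.IsHermitian) (htr : h.trace = 0) (hne : h ≠ 0) (hnorm : opNorm h ≤ 1)
    (horth : ∀ n : ℕ, 3 ≤ n → ∀ i j : Fin n, i ≠ j →
      (twoSite n i h * twoSite n j h).trace = 0)
    (δ : ℝ) (hδ0 : 0 < δ) (hδ1 : δ < 1) (k : ℕ) (hk : 0 < k)
    (U : ∀ n : ℕ, Matrix (Cfg n) (Cfg n) ℂ) (E : ∀ n : ℕ, Cfg n → ℝ)
    (hU : ∀ n : ℕ, 3 ≤ n → U n ∈ Matrix.unitaryGroup (Cfg n) ℂ)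
    (hdecomp : ∀ n : ℕ, 3 ≤ n →
      ham h n = U n * Matrix.diagonal (fun j => (E n j : ℂ)) * (U n)ᴴ)
    (A : ∀ n : ℕ, Matrix (Cfg n) (Cfg n) ℂ)
    (htrA : ∀ n : ℕ, 3 ≤ n → (A n).trace = 0)
    (hnormA : ∀ n : ℕ, 3 ≤ n → opNorm (A n) ≤ 1)
    (hsuppA : ∀ n : ℕ, 3 ≤ n → SupportedOnConsec k (A n))
    (fA : ℝ → ℂ) (hETH : ETH δ E U A fA) (hfA0 : fA 0 = 0) :
    ∃ C : ℝ, ∀ n : ℕ, 3 ≤ n →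
      (∑ j : Cfg n, ‖((U n)ᴴ * A n * U n) j j‖ ^ 4) / 2 ^ n ≤ C / (n : ℝ) ^ 2 := by
  obtain ⟨hsmooth, hbd, hf_err⟩ := hETH
  obtain ⟨C₂, hC₂⟩ := hf_err 2 (by norm_num)
  set C₂' := max C₂ 0 with hC₂'def
  have hC₂'0 : 0 ≤ C₂' := le_max_right _ _
  obtain ⟨K, hK0, hKlip⟩ := lip_bound hδ0 hsmooth hfA0
  refine ⟨(8*K^4 + 1/δ^4) * 48384 + 8*C₂'^4, fun n hn => ?_⟩
  have hsumE4 := sum_E4_bound h hn htr hnorm (U n) (E n) (hU n hn) (hdecomp n hn)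
  have hn3 : (3:ℝ) ≤ n := by exact_mod_cast hn
  have hn0 : (0:ℝ) < n := by linarith
  have hn1 : (1:ℝ) ≤ n := by linarith
  set B := (U n)ᴴ * A n * U n with hB
  have hpoint : ∀ j : Cfg n, ‖B j j‖^4 ≤
      (8*K^4 + 1/δ^4)/(n:ℝ)^4 * (E n j)^4 + 8*C₂'^4/(n:ℝ)^2 := by
    intro j
    have habs0 : 0 ≤ ‖B j j‖ := norm_nonneg _
    by_cases hEj : |E n j| ≤ δ * n
    · -- in the energy window
      have harg : E n j / n ∈ Set.Icc (-δ) δ := by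
        rw [Set.mem_Icc, ← abs_le]
        rw [abs_div, abs_of_pos hn0, div_le_iff₀ hn0]
        exact hEj
      have h1 : ‖B j j‖ ≤ K * (|E n j|/n) + C₂'/(n:ℝ)^2 := by
        have hsplit : ‖B j j‖ ≤
            ‖B j j - fA (E n j / n)‖ + ‖fA (E n j / n)‖ := by
          calc ‖B j j‖ = ‖(B j j - fA (E n j / n)) + fA (E n j / n)‖ := by
                ring_nf
            _ ≤ _ := norm_add_le _ _
        have herr : ‖B j j - fA (E n j / n)‖ ≤ C₂'/(n:ℝ)^2 := by
          calc ‖B j j - fA (E n j / n)‖ ≤ C₂ * (n:ℝ)^(-(2:ℝ)) := hC₂ n hn j hEj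
            _ ≤ C₂' * (n:ℝ)^(-(2:ℝ)) := by
                apply mul_le_mul_of_nonneg_right (le_max_left _ _) (by positivity)
            _ = C₂'/(n:ℝ)^2 := by
                rw [rpow_neg_two n (by omega)]
                ring
        have hfb : ‖fA (E n j / n)‖ ≤ K * (|E n j|/n) := by
          calc ‖fA (E n j / n)‖ ≤ K * |E n j / n| := hKlip _ harg
            _ = K * (|E n j|/n) := by rw [abs_div, abs_of_pos hn0]
        linarith
      calc ‖B j j‖^4 ≤ (K * (|E n j|/n) + C₂'/(n:ℝ)^2)^4 := by
            apply pow_le_pow_left₀ habs0 h1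
        _ ≤ 8 * (K * (|E n j|/n))^4 + 8 * (C₂'/(n:ℝ)^2)^4 := by
            apply pow4_add_le _ _ (by positivity) (by positivity)
        _ = 8 * K^4 * (E n j)^4 / (n:ℝ)^4 + 8 * C₂'^4 / (n:ℝ)^8 := by
            rw [mul_pow, div_pow, div_pow, abs_pow4]
            ring
        _ ≤ (8*K^4 + 1/δ^4)/(n:ℝ)^4 * (E n j)^4 + 8*C₂'^4/(n:ℝ)^2 := by
            have hE4 : 0 ≤ (E n j)^4 := by positivity
            have h8 : (n:ℝ)^2 ≤ (n:ℝ)^8 := by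
              apply pow_le_pow_right₀ hn1 (by norm_num)
            have : 8 * C₂'^4 / (n:ℝ)^8 ≤ 8 * C₂'^4 / (n:ℝ)^2 := by
              apply div_le_div_of_nonneg_left (by positivity) (by positivity) h8
            have h2 : 8 * K^4 * (E n j)^4 / (n:ℝ)^4 ≤ (8*K^4 + 1/δ^4)/(n:ℝ)^4 * (E n j)^4 := by
              have hnn : (0:ℝ) ≤ (1/δ^4) * (E n j)^4 / (n:ℝ)^4 := by positivity
              have hexp : (8*K^4 + 1/δ^4)/(n:ℝ)^4 * (E n j)^4
                  = 8*K^4*(E n j)^4/(n:ℝ)^4 + (1/δ^4)*(E n j)^4/(n:ℝ)^4 := by ring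
              linarith
            linarith
    · -- out of window
      push_neg at hEj
      have h2 : ‖B j j‖ ≤ 1 := le_trans (diag_conj_le_opNorm (U n) (A n) (hU n hn) j)
        (hnormA n hn)
      have hd4 : (δ * n)^4 ≤ (E n j)^4 := by
        rw [← abs_pow4 (E n j)]
        apply pow_le_pow_left₀ (by positivity) (le_of_lt hEj)
      have h3 : (1:ℝ) ≤ 1/δ^4 * (E n j)^4 / (n:ℝ)^4 := by
        rw [le_div_iff₀ (by positivity), one_mul]
        calc (n:ℝ)^4 = 1/δ^4 * (δ*n)^4 := by field_simp
          _ ≤ 1/δ^4 * (E n j)^4 := by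
            apply mul_le_mul_of_nonneg_left hd4 (by positivity)
      calc ‖B j j‖^4 ≤ 1^4 := pow_le_pow_left₀ habs0 h2 4
        _ = 1 := one_pow 4
        _ ≤ 1/δ^4 * (E n j)^4 / (n:ℝ)^4 := h3
        _ ≤ (8*K^4 + 1/δ^4)/(n:ℝ)^4 * (E n j)^4 + 8*C₂'^4/(n:ℝ)^2 := by
            have hE4 : (0:ℝ) ≤ (E n j)^4 := by positivity
            have hnn : (0:ℝ) ≤ 8*K^4*(E n j)^4/(n:ℝ)^4 := by positivity
            have hc2 : (0:ℝ) ≤ 8*C₂'^4/(n:ℝ)^2 := by positivity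
            have hexp : (8*K^4 + 1/δ^4)/(n:ℝ)^4 * (E n j)^4
                = 8*K^4*(E n j)^4/(n:ℝ)^4 + (1/δ^4)*(E n j)^4/(n:ℝ)^4 := by ring
            have hrw : 1/δ^4 * (E n j)^4 / (n:ℝ)^4 = (1/δ^4)*(E n j)^4/(n:ℝ)^4 := by ring
            linarith
  have hcard : (Fintype.card (Cfg n) : ℝ) = 2^n := by simp
  have hsum : ∑ j : Cfg n, ‖B j j‖^4 ≤
      (8*K^4 + 1/δ^4)/(n:ℝ)^4 * (48384 * (n:ℝ)^2 * 2^n) + 2^n * (8*C₂'^4/(n:ℝ)^2) := by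
    calc ∑ j : Cfg n, ‖B j j‖^4
        ≤ ∑ j : Cfg n, ((8*K^4 + 1/δ^4)/(n:ℝ)^4 * (E n j)^4 + 8*C₂'^4/(n:ℝ)^2) :=
          Finset.sum_le_sum fun j _ => hpoint j
      _ = (8*K^4 + 1/δ^4)/(n:ℝ)^4 * (∑ j : Cfg n, (E n j)^4)
          + (Fintype.card (Cfg n) : ℝ) * (8*C₂'^4/(n:ℝ)^2) := by
          rw [Finset.sum_add_distrib, ← Finset.mul_sum, Finset.sum_const, Finset.card_univ,
            nsmul_eq_mul]
      _ ≤ (8*K^4 + 1/δ^4)/(n:ℝ)^4 * (48384 * (n:ℝ)^2 * 2^n) + 2^n * (8*C₂'^4/(n:ℝ)^2) := by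
          rw [hcard]
          apply add_le_add_left
          apply mul_le_mul_of_nonneg_left hsumE4 (by positivity)
  calc (∑ j : Cfg n, ‖B j j‖ ^ 4) / 2 ^ n
      ≤ ((8*K^4 + 1/δ^4)/(n:ℝ)^4 * (48384 * (n:ℝ)^2 * 2^n) + 2^n * (8*C₂'^4/(n:ℝ)^2)) / 2^n := by
        exact (div_le_div_iff_of_pos_right (by positivity)).mpr hsum
    _ = ((8*K^4 + 1/δ^4) * 48384 + 8*C₂'^4) / (n:ℝ)^2 := by
        have h2n : (0:ℝ) < 2^n := by positivity
        field_simp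
end
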